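/- arXiv:1311.6608 — 6 statements merged into one kernel-verified Lean document; each statement's English description precedes it below -/
import Mathlib

section
/- Let N be a group and A a finite normal subgroup of N such that the quotient N/A is infinite cyclic. Then every element g of N has a positive power g^n (for some integer n > 0) lying in the center of N. -/
/-- If `A` is a finite normal subgroup of a group `N` such that the quotient
`N ⧸ A` is infinite cyclic, then every element of `N` has a positive power
lying in the center of `N`. -/
theorem power_central_of_finite_by_infinite_cyclic (N : Type*) [Group N]
    (A : Subgroup N) [A.Normal] [Finite A]
    (hcyc : IsCyclic (N ⧸ A)) (hinf : Infinite (N ⧸ A)) :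
    ∀ g : N, ∃ n : ℕ, 0 < n ∧ g ^ n ∈ Subgroup.center N := by
  obtain ⟨z, hz⟩ := hcyc.exists_generator
  obtain ⟨t, ht⟩ := QuotientGroup.mk_surjective z
  haveI : Finite (MulAut ↥A) :=
    Finite.of_injective (fun e => (e : ↥A → ↥A)) (fun e f h => DFunLike.coe_injective h)
  set m := orderOf (MulAut.conjNormal t : MulAut ↥A) with hm
  have hm0 : 0 < m := orderOf_pos _
  -- t^m centralizes A
  have hcent : ∀ a : N, a ∈ A → t ^ m * a * (t ^ m)⁻¹ = a := by
    intro a ha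
    have h2 : ((MulAut.conjNormal (t ^ m)) ⟨a, ha⟩ : N) = a := by
      rw [hm, map_pow, pow_orderOf_eq_one]; rfl
    rwa [MulAut.conjNormal_apply] at h2
  -- decomposition of elements of N
  have hdecomp : ∀ x : N, ∃ a ∈ A, ∃ k : ℤ, x = a * t ^ k := by
    intro x
    obtain ⟨k, hk⟩ := Subgroup.mem_zpowers_iff.mp (hz (QuotientGroup.mk x))
    have h1 : (QuotientGroup.mk (x * (t ^ k)⁻¹) : N ⧸ A) = 1 := by
      rw [QuotientGroup.mk_mul, QuotientGroup.mk_inv, QuotientGroup.mk_zpow, ht, hk,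
        mul_inv_cancel]
    exact ⟨x * (t ^ k)⁻¹, (QuotientGroup.eq_one_iff _).mp h1, k, by group⟩
  -- t^m is central
  have htm : t ^ m ∈ Subgroup.center N := by
    rw [Subgroup.mem_center_iff]
    intro x
    obtain ⟨a, ha, k, rfl⟩ := hdecomp x
    have h2 : t ^ m * a = a * t ^ m := by
      calc t ^ m * a = (t ^ m * a * (t ^ m)⁻¹) * t ^ m := by group
      _ = a * t ^ m := by rw [hcent a ha]
    have hc : t ^ k * t ^ m = t ^ m * t ^ k := by
      rw [← zpow_natCast t m, ← zpow_add, ← zpow_add, add_comm]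
    calc a * t ^ k * t ^ m = a * (t ^ m * t ^ k) := by rw [mul_assoc, hc]
    _ = t ^ m * (a * t ^ k) := by rw [← mul_assoc, ← h2, mul_assoc]
  -- the center has finite index
  have hfin : Finite (N ⧸ Subgroup.center N) := by
    have hsurj : Function.Surjective (fun p : ↥A × Fin m =>
        (QuotientGroup.mk ((p.1 : N) * t ^ (p.2 : ℕ)) : N ⧸ Subgroup.center N)) := by
      intro x
      obtain ⟨y, rfl⟩ := QuotientGroup.mk_surjective x
      obtain ⟨a, ha, k, rfl⟩ := hdecomp y
      have hmne : (m : ℤ) ≠ 0 := by exact_mod_cast hm0.ne'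
      have hrnn : 0 ≤ k % (m : ℤ) := Int.emod_nonneg k hmne
      have hrlt : k % (m : ℤ) < m := Int.emod_lt_of_pos k (by exact_mod_cast hm0)
      set r : ℕ := (k % (m : ℤ)).toNat with hrdef
      have hr : (r : ℤ) = k % (m : ℤ) := Int.toNat_of_nonneg hrnn
      refine ⟨(⟨a, ha⟩, ⟨r, ?_⟩), ?_⟩
      · omega
      · show (QuotientGroup.mk (a * t ^ r) : N ⧸ Subgroup.center N) = QuotientGroup.mk (a * t ^ k)
        rw [QuotientGroup.eq]
        have key : (t : N) ^ (k : ℤ) = t ^ r * (t ^ m) ^ (k / (m : ℤ)) := by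
          rw [← zpow_natCast t r, ← zpow_natCast t m, ← zpow_mul, ← zpow_add]
          congr 1
          have hde := Int.mul_ediv_add_emod k (m : ℤ)
          linarith [hr, hde]
        have heq : (a * t ^ r)⁻¹ * (a * t ^ (k : ℤ)) = (t ^ m) ^ (k / (m : ℤ)) := by
          rw [key]; group
        rw [heq]
        exact Subgroup.zpow_mem _ htm _
    exact Finite.of_surjective _ hsurj
  intro g
  refine ⟨orderOf (QuotientGroup.mk g : N ⧸ Subgroup.center N), orderOf_pos _, ?_⟩
  rw [← QuotientGroup.eq_one_iff, QuotientGroup.mk_pow, pow_orderOf_eq_one]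
end

section
/- Let N be a group, A a finite normal subgroup of N, and N₊ a subgroup of N of index at most 2 that contains A and is normal in N, such that N₊/A is infinite cyclic. Then for every element g of N₊ of infinite order there exists an integer n > 0 such that for all h in N, h g^n h⁻¹ equals g^n or g^{-n}. -/
private lemma aux_pm {Q : Type*} [Group Q] [IsCyclic Q] [Infinite Q]
    (α β : Q →* Q) (hβα : ∀ x, β (α x) = x) (x : Q) :
    α x = x ∨ α x = x⁻¹ := by
  obtain ⟨t, ht⟩ := IsCyclic.exists_generator (α := Q)
  have htord : ¬ IsOfFinOrder t := by
    intro hf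
    have h1 : (Subgroup.zpowers t : Set Q).Finite := hf.finite_zpowers
    have h2 : (Set.univ : Set Q) ⊆ (Subgroup.zpowers t : Set Q) := fun y _ => ht y
    exact Set.infinite_univ (h1.subset h2)
  have hinj : Function.Injective (fun n : ℤ => t ^ n) :=
    injective_zpow_iff_not_isOfFinOrder.2 htord
  obtain ⟨k, hk⟩ := Subgroup.mem_zpowers_iff.1 (ht (α t))
  obtain ⟨l, hl⟩ := Subgroup.mem_zpowers_iff.1 (ht (β t))
  have h1 : t ^ (l * k) = t ^ (1 : ℤ) := by
    rw [zpow_one, zpow_mul, hl, ← map_zpow, hk]; exact hβα t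
  have hlk : l * k = 1 := hinj h1
  obtain ⟨s, hs⟩ := Subgroup.mem_zpowers_iff.1 (ht x)
  have hax : α x = x ^ k := by
    rw [← hs, map_zpow, ← hk, ← zpow_mul, mul_comm, zpow_mul]
  rcases Int.isUnit_iff.1 (IsUnit.of_mul_eq_one (a := k) l (by rw [mul_comm]; exact hlk)) with h | h
  · left; rw [hax, h, zpow_one]
  · right; rw [hax, h, zpow_neg_one]

/-- Let `N` be a group, `A` a finite normal subgroup of `N`, and `N₊` a normal
subgroup of `N` of index at most `2` containing `A`, such that `N₊ ⧸ A` is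
infinite cyclic.  Then for every element `g` of `N₊` of infinite order there is
an integer `n > 0` such that every conjugate of `g ^ n` in `N` equals `g ^ n`
or `g ^ (-n)`. -/
theorem tight_power_of_axis_stabilizer (N : Type*) [Group N]
    (A Nplus : Subgroup N) [A.Normal] [Nplus.Normal] [Finite A]
    (hle : A ≤ Nplus) (hindex : Nplus.index ≤ 2)
    [(A.subgroupOf Nplus).Normal]
    (hcyc : IsCyclic (Nplus ⧸ A.subgroupOf Nplus))
    (hinf : Infinite (Nplus ⧸ A.subgroupOf Nplus)) :
    ∀ g : N, g ∈ Nplus → ¬ IsOfFinOrder g →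
      ∃ n : ℕ, 0 < n ∧ ∀ h : N, h * g ^ n * h⁻¹ = g ^ n ∨ h * g ^ n * h⁻¹ = (g ^ n)⁻¹ := by
  haveI := hcyc
  haveI := hinf
  intro g hg hgord
  set Q := Nplus ⧸ A.subgroupOf Nplus with hQ
  let π : Nplus →* Q := QuotientGroup.mk' (A.subgroupOf Nplus)
  -- a power of `g` centralizing `A`
  let φ : N →* MulAut A := MulAut.conjNormal
  obtain ⟨m, hm, hφm⟩ := isOfFinOrder_iff_pow_eq_one.1 (isOfFinOrder_of_finite (φ g))
  have hcent : ∀ a ∈ A, g ^ m * a * (g ^ m)⁻¹ = a := by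
    intro a ha
    have h1 : φ (g ^ m) = 1 := by rw [map_pow]; exact hφm
    have h2 : (MulAut.conjNormal (g ^ m) : MulAut A) ⟨a, ha⟩ = ⟨a, ha⟩ := by
      show (φ (g ^ m)) ⟨a, ha⟩ = ⟨a, ha⟩
      rw [h1]; rfl
    have h3 := MulAut.conjNormal_apply (H := A) (g ^ m) ⟨a, ha⟩
    rw [h2] at h3
    exact h3.symm
  -- the centralizer construction
  set C : Subgroup N := Subgroup.centralizer (A : Set N) ⊓ Nplus with hC
  have hCN : C ≤ Nplus := inf_le_right
  have hgmC : g ^ m ∈ C := by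
    refine ⟨Subgroup.mem_centralizer_iff.2 fun a ha => ?_, Nplus.pow_mem hg m⟩
    have := hcent a ha
    rw [mul_inv_eq_iff_eq_mul] at this
    exact this.symm
  -- C is commutative
  have hkerf : (π.comp (Subgroup.inclusion hCN)).ker ≤ Subgroup.center C := by
    intro x hx
    have hxA : (x : N) ∈ A := by
      have h0 : QuotientGroup.mk' (A.subgroupOf Nplus) (Subgroup.inclusion hCN x) = 1 := hx
      rw [QuotientGroup.mk'_apply, QuotientGroup.eq_one_iff] at h0
      exact h0
    rw [Subgroup.mem_center_iff]
    intro y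
    have hy : (y : N) ∈ Subgroup.centralizer (A : Set N) := y.2.1
    have := Subgroup.mem_centralizer_iff.1 hy (x : N) hxA
    exact Subtype.ext this.symm
  have hcomm : ∀ x y : C, x * y = y * x :=
    commutative_of_cyclic_center_quotient (π.comp (Subgroup.inclusion hCN)) hkerf
  -- the exponent
  set k := Nat.card A with hk
  have hkpos : 0 < k := Nat.card_pos
  refine ⟨m * k, Nat.mul_pos hm hkpos, fun h => ?_⟩
  -- conjugation by h induces an endomorphism of Q with left inverse
  have hconj : ∀ (h : N), ∃ α : Q →* Q, ∀ x : Nplus,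
      α (π x) = π ⟨h * x * h⁻¹, Subgroup.Normal.conj_mem ‹Nplus.Normal› x x.2 h⟩ := by
    intro h
    let e : Nplus →* Nplus := (MulAut.conjNormal h : MulAut Nplus).toMonoidHom
    have hker : A.subgroupOf Nplus ≤ (π.comp e).ker := by
      intro x hx
      have hxA : (x : N) ∈ A := hx
      rw [MonoidHom.mem_ker, MonoidHom.comp_apply, QuotientGroup.mk'_apply,
        QuotientGroup.eq_one_iff]
      show ((MulAut.conjNormal h x : Nplus) : N) ∈ A
      rw [MulAut.conjNormal_apply]
      exact Subgroup.Normal.conj_mem ‹A.Normal› _ hxA h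
    refine ⟨QuotientGroup.lift (A.subgroupOf Nplus) (π.comp e) hker, fun x => ?_⟩
    show π (e x) = _
    exact congrArg π (Subtype.ext (MulAut.conjNormal_apply h x))
  obtain ⟨α, hα⟩ := hconj h
  obtain ⟨β, hβ⟩ := hconj h⁻¹
  have hβα : ∀ q : Q, β (α q) = q := by
    intro q
    induction q using QuotientGroup.induction_on with
    | H x =>
      show β (α (π x)) = π x
      rw [hα x, hβ]
      congr 1
      apply Subtype.ext
      show h⁻¹ * (h * (x : N) * h⁻¹) * h⁻¹⁻¹ = (x : N)
      group
  -- conjugate of g^m lies in C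
  have hconjC : h * g ^ m * h⁻¹ ∈ C := by
    refine ⟨Subgroup.mem_centralizer_iff.2 fun b hb => ?_, 
      Subgroup.Normal.conj_mem ‹Nplus.Normal› _ (Nplus.pow_mem hg m) h⟩
    have hb' : h⁻¹ * b * h ∈ A := by
      have := Subgroup.Normal.conj_mem ‹A.Normal› b hb h⁻¹
      simpa using this
    have hcomm' : (h⁻¹ * b * h) * g ^ m = g ^ m * (h⁻¹ * b * h) :=
      Subgroup.mem_centralizer_iff.1 hgmC.1 _ hb'
    calc b * (h * g ^ m * h⁻¹) = h * ((h⁻¹ * b * h) * g ^ m) * h⁻¹ := by group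
      _ = h * (g ^ m * (h⁻¹ * b * h)) * h⁻¹ := by rw [hcomm']
      _ = (h * g ^ m * h⁻¹) * b := by group
  -- key step: from h g^m h⁻¹ = t * a⁻¹ with t ∈ C, a ∈ A, conclude h g^(mk) h⁻¹ = t^k
  have key : ∀ t : N, t ∈ C → ∀ a : N, a ∈ A → (h * g ^ m * h⁻¹) * a = t →
      h * g ^ (m * k) * h⁻¹ = t ^ k := by
    intro t ht a ha hta
    have haC : a ∈ C := by
      have : a = (h * g ^ m * h⁻¹)⁻¹ * t := by rw [← hta]; group
      rw [this]
      exact C.mul_mem (C.inv_mem hconjC) ht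
    have hcomm2 : Commute t a⁻¹ := by
      have := hcomm ⟨t, ht⟩ ⟨a⁻¹, C.inv_mem haC⟩
      exact congrArg Subtype.val this
    have hak : a ^ k = 1 := by
      have : (⟨a, ha⟩ : A) ^ k = 1 := pow_card_eq_one'
      exact congrArg Subtype.val this
    have h1 : h * g ^ (m * k) * h⁻¹ = (h * g ^ m * h⁻¹) ^ k := by
      rw [pow_mul, conj_pow]
    rw [h1, eq_mul_inv_of_mul_eq hta, hcomm2.mul_pow, inv_pow, hak, inv_one, mul_one]
  -- apply the ± lemma
  rcases aux_pm α β hβα (π ⟨g, hg⟩) with hcase | hcase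
  · left
    rw [hα] at hcase
    -- π ⟨h g h⁻¹⟩ = π ⟨g⟩ ; raise to the m-th power
    have hm' : π (⟨h * g * h⁻¹, Subgroup.Normal.conj_mem ‹Nplus.Normal› g hg h⟩ ^ m) = π (⟨g, hg⟩ ^ m) := by rw [map_pow, map_pow, hcase]
    obtain ⟨z, hz, hzeq⟩ := (QuotientGroup.mk'_eq_mk' (A.subgroupOf Nplus)).1 hm'
    have hzval : (h * g * h⁻¹) ^ m * (z : N) = g ^ m := congrArg Subtype.val hzeq
    rw [conj_pow] at hzval
    have := key (g ^ m) hgmC (z : N) hz hzval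
    rw [← pow_mul] at this
    exact this
  · right
    rw [hα] at hcase
    have hginv : (π ⟨g, hg⟩)⁻¹ = π ⟨g, hg⟩⁻¹ := (map_inv π _).symm
    rw [hginv] at hcase
    have hm' : π (⟨h * g * h⁻¹, Subgroup.Normal.conj_mem ‹Nplus.Normal› g hg h⟩ ^ m) = π (⟨g, hg⟩⁻¹ ^ m) := by rw [map_pow, map_pow, hcase]
    obtain ⟨z, hz, hzeq⟩ := (QuotientGroup.mk'_eq_mk' (A.subgroupOf Nplus)).1 hm'
    have hzval : (h * g * h⁻¹) ^ m * (z : N) = g⁻¹ ^ m := congrArg Subtype.val hzeq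
    rw [conj_pow] at hzval
    rw [inv_pow] at hzval
    have hginvC : (g ^ m)⁻¹ ∈ C := C.inv_mem hgmC
    have := key ((g ^ m)⁻¹) hginvC (z : N) hz hzval
    rw [inv_pow, ← pow_mul] at this
    exact this
end

section
/- For every integer p ≥ 4 there is a unique real number m_p in the open interval (1,2) satisfying m_p^p (2 − m_p) = 2 m_p − 1. Moreover 2 − 4 m_p^{−p} < m_p < 2, the sequence (m_p) is strictly increasing in p, and m_p tends to 2 as p tends to infinity. -/
open Set Filter

private noncomputable def Kf (n : ℕ) (x : ℝ) : ℝ :=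
  2 * (n + 1) - (n + 2) * x - 2 * x ^ (-(n : ℤ))

private def gf (p : ℕ) (x : ℝ) : ℝ := x ^ p * (2 - x) - (2 * x - 1)

private lemma master (p : ℕ) (hp : 4 ≤ p) :
    (∃ m ∈ Ioo (1 : ℝ) 2, m ^ p * (2 - m) = 2 * m - 1) ∧
    (∀ x ∈ Ioo (1 : ℝ) 2, ∀ y ∈ Ioo (1 : ℝ) 2,
       2 * x - 1 < x ^ p * (2 - x) → y ^ p * (2 - y) = 2 * y - 1 → x < y) ∧
    (∀ x ∈ Ioo (1 : ℝ) 2, ∀ y ∈ Ioo (1 : ℝ) 2,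
       x ^ p * (2 - x) = 2 * x - 1 → y ^ p * (2 - y) = 2 * y - 1 → x = y) := by
  obtain ⟨n, rfl⟩ : ∃ n, p = n + 1 := ⟨p - 1, by omega⟩
  have hn : 3 ≤ n := by omega
  have hn3 : (3 : ℝ) ≤ n := by exact_mod_cast hn
  -- strict convexity of x ↦ x ^ (-n)
  have hzc : StrictConvexOn ℝ (Ioi (0:ℝ)) fun x : ℝ => x ^ (-(n : ℤ)) :=
    strictConvexOn_zpow (by omega) (by omega)
  -- three-point strict concavity of Kf
  have hKmid : ∀ x y z : ℝ, 1 ≤ x → x < y → y < z →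
      ((z - y) / (z - x)) * Kf n x + ((y - x) / (z - x)) * Kf n z < Kf n y := by
    intro x y z hx hxy hyz
    have hx0 : (0:ℝ) < x := by linarith
    have hz0 : (0:ℝ) < z := by linarith
    have hzx : (0:ℝ) < z - x := by linarith
    set a := (z - y) / (z - x) with ha_def
    set b := (y - x) / (z - x) with hb_def
    have ha : 0 < a := div_pos (by linarith) hzx
    have hb : 0 < b := div_pos (by linarith) hzx
    have hab : a + b = 1 := by rw [ha_def, hb_def]; field_simp; ring
    have hxyz : a * x + b * z = y := by rw [ha_def, hb_def]; field_simp; ring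
    have h := hzc.2 (mem_Ioi.2 hx0) (mem_Ioi.2 hz0) (by intro hE; exact absurd hE (by linarith)) ha hb hab
    simp only [smul_eq_mul] at h
    rw [hxyz] at h
    have expand : a * Kf n x + b * Kf n z =
        (a + b) * (2 * (n + 1)) - (n + 2) * (a * x + b * z)
          - 2 * (a * x ^ (-(n : ℤ)) + b * z ^ (-(n : ℤ))) := by
      simp only [Kf]; ring
    rw [expand, hab, hxyz]
    simp only [Kf]
    linarith
  have hK1 : Kf n 1 = (n : ℝ) - 2 := by simp [Kf]; ring
  have hK1pos : 0 < Kf n 1 := by rw [hK1]; linarith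
  have hK2neg : Kf n 2 < 0 := by
    have h2 : (0:ℝ) < (2:ℝ) ^ (-(n:ℤ)) := zpow_pos (by norm_num) _
    have : Kf n 2 = -2 - 2 * (2:ℝ) ^ (-(n:ℤ)) := by simp only [Kf]; ring
    linarith
  have hKcont : ContinuousOn (Kf n) (Icc (1:ℝ) 2) := by
    have heq : EqOn (Kf n) (fun x : ℝ => 2 * ((n:ℝ) + 1) - ((n:ℝ) + 2) * x - 2 * (x ^ n)⁻¹)
        (Icc (1:ℝ) 2) := by
      intro x hx
      simp only [Kf, zpow_neg, zpow_natCast]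
    refine ContinuousOn.congr ?_ heq
    refine (continuousOn_const.sub (continuousOn_const.mul continuousOn_id)).sub
      (continuousOn_const.mul ((continuous_pow n).continuousOn.inv₀ fun x hx => ?_))
    exact ne_of_gt (pow_pos (by linarith [hx.1]) n)
  -- find s with Kf n s = 0
  obtain ⟨s, hs, hKs⟩ : ∃ s ∈ Ioo (1:ℝ) 2, Kf n s = 0 := by
    have h := intermediate_value_Ioo' (by norm_num : (1:ℝ) ≤ 2) hKcont
    have h0 : (0:ℝ) ∈ Ioo (Kf n 2) (Kf n 1) := ⟨hK2neg, hK1pos⟩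
    obtain ⟨s, hs, hKs⟩ := h h0
    exact ⟨s, hs, hKs⟩
  -- sign of K
  have hKpos : ∀ y ∈ Ioo (1:ℝ) s, 0 < Kf n y := by
    intro y hy
    have h := hKmid 1 y s le_rfl hy.1 hy.2
    rw [hKs] at h
    have ha : 0 < (s - y) / (s - 1) := div_pos (by linarith [hy.2]) (by linarith [hy.1, hy.2])
    nlinarith [mul_pos ha hK1pos]
  have hKneg : ∀ y ∈ Ioo s 2, Kf n y < 0 := by
    intro y hy
    have h := hKmid 1 s y le_rfl hs.1 hy.1
    rw [hKs] at h
    have ha : 0 < (y - s) / (y - 1) := div_pos (by linarith [hy.1]) (by linarith [hs.1, hy.1])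
    have hb : 0 < (s - 1) / (y - 1) := div_pos (by linarith [hs.1]) (by linarith [hs.1, hy.1])
    nlinarith [mul_pos ha hK1pos, mul_pos hb ha]
  -- derivative of gf
  have hg' : ∀ x : ℝ, HasDerivAt (gf (n+1))
      (2 * ((n:ℝ)+1) * x ^ n - ((n:ℝ)+2) * x ^ (n+1) - 2) x := by
    intro x
    have h2 : HasDerivAt (fun y : ℝ => 2 * y - 1) 2 x := by
      simpa using ((hasDerivAt_id x).const_mul 2).sub_const 1
    have hlin : HasDerivAt (fun y : ℝ => 2 - y) (-1) x := by
      simpa using (hasDerivAt_id' x).const_sub (2:ℝ)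
    have hpow := hasDerivAt_pow (n+1) x
    have h1 := (hpow.fun_mul hlin).fun_sub h2
    have : gf (n+1) = fun y : ℝ => y ^ (n+1) * (2 - y) - (2 * y - 1) := rfl
    rw [this]
    refine h1.congr_deriv ?_
    simp only [Nat.add_sub_cancel]
    push_cast
    ring
  have hderiv_eq : ∀ x : ℝ, 0 < x → deriv (gf (n+1)) x = x ^ n * Kf n x := by
    intro x hx
    rw [(hg' x).deriv]
    have hz : x ^ (-(n:ℤ)) = (x ^ n)⁻¹ := by rw [zpow_neg, zpow_natCast]
    simp only [Kf, hz]
    field_simp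
    ring
  have hgcont : Continuous (gf (n+1)) := by
    unfold gf; continuity
  -- strict mono/anti
  have hmono : StrictMonoOn (gf (n+1)) (Icc 1 s) := by
    apply strictMonoOn_of_deriv_pos (convex_Icc 1 s) hgcont.continuousOn
    intro x hx
    rw [interior_Icc] at hx
    rw [hderiv_eq x (by linarith [hx.1])]
    exact mul_pos (pow_pos (by linarith [hx.1]) n) (hKpos x hx)
  have hanti : StrictAntiOn (gf (n+1)) (Icc s 2) := by
    apply strictAntiOn_of_deriv_neg (convex_Icc s 2) hgcont.continuousOn
    intro x hx
    rw [interior_Icc] at hx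
    rw [hderiv_eq x (by linarith [hs.1, hx.1])]
    exact mul_neg_of_pos_of_neg (pow_pos (by linarith [hs.1, hx.1]) n) (hKneg x hx)
  have hg1 : gf (n+1) 1 = 0 := by simp [gf]
  have hg2 : gf (n+1) 2 = -3 := by norm_num [gf]
  have hgs : 0 < gf (n+1) s := by
    have := hmono ⟨le_rfl, hs.1.le⟩ ⟨hs.1.le, le_rfl⟩ hs.1
    rw [hg1] at this; exact this
  -- every root is > s
  have hroot_gt : ∀ x ∈ Ioo (1:ℝ) 2, gf (n+1) x = 0 → s < x := by
    intro x hx hgx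
    by_contra hc
    push_neg at hc
    have := hmono ⟨le_rfl, hs.1.le⟩ ⟨hx.1.le, hc⟩ hx.1
    rw [hg1, hgx] at this
    exact lt_irrefl 0 this
  -- comparison
  have hcmp : ∀ x ∈ Ioo (1:ℝ) 2, ∀ y ∈ Ioo (1:ℝ) 2, 0 < gf (n+1) x → gf (n+1) y = 0 → x < y := by
    intro x hx y hy hgx hgy
    have hsy := hroot_gt y hy hgy
    by_contra hc
    push_neg at hc
    rcases eq_or_lt_of_le hc with h | h
    · rw [h] at hgy; rw [hgy] at hgx; exact lt_irrefl 0 hgx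
    · have := hanti ⟨hsy.le, hy.2.le⟩ ⟨(hsy.trans h).le, hx.2.le⟩ h
      rw [hgy] at this; linarith
  refine ⟨?_, ?_, ?_⟩
  · -- existence
    have h := intermediate_value_Ioo' hs.2.le hgcont.continuousOn
    have h0 : (0:ℝ) ∈ Ioo (gf (n+1) 2) (gf (n+1) s) := by rw [hg2]; exact ⟨by norm_num, hgs⟩
    obtain ⟨m, hm, hgm⟩ := h h0
    refine ⟨m, ⟨hs.1.trans hm.1, hm.2⟩, ?_⟩
    have : gf (n+1) m = 0 := hgm
    simpa [gf, sub_eq_zero] using this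
  · intro x hx y hy hlt heq
    exact hcmp x hx y hy (by simp only [gf]; linarith) (by simp only [gf]; linarith)
  · intro x hx y hy hx0 hy0
    have hx0' : gf (n+1) x = 0 := by simp only [gf]; linarith
    have hy0' : gf (n+1) y = 0 := by simp only [gf]; linarith
    have hsx := hroot_gt x hx hx0'
    have hsy := hroot_gt y hy hy0'
    exact hanti.injOn ⟨hsx.le, hx.2.le⟩ ⟨hsy.le, hy.2.le⟩ (hx0'.trans hy0'.symm)

/-- For every integer `p ≥ 4` there is a unique `m_p ∈ (1,2)` with
`m_p ^ p * (2 - m_p) = 2 * m_p - 1`; moreover `2 - 4 * m_p ^ (-p) < m_p < 2`,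
the sequence `(m_p)` is strictly increasing, and `m_p → 2` as `p → ∞`. -/
theorem mp_exists_unique_and_tends_to_two :
    (∀ p : ℕ, 4 ≤ p →
      ∃! m : ℝ, m ∈ Set.Ioo (1 : ℝ) 2 ∧ m ^ p * (2 - m) = 2 * m - 1) ∧
    ∀ m : ℕ → ℝ,
      (∀ p : ℕ, 4 ≤ p → m p ∈ Set.Ioo (1 : ℝ) 2 ∧ (m p) ^ p * (2 - m p) = 2 * m p - 1) →
      (∀ p : ℕ, 4 ≤ p → 2 - 4 * (m p)⁻¹ ^ p < m p ∧ m p < 2) ∧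
      (∀ p : ℕ, 4 ≤ p → m p < m (p + 1)) ∧
      Filter.Tendsto m Filter.atTop (nhds 2) := by
  constructor
  · intro p hp
    obtain ⟨⟨a, ha, haeq⟩, _, huniq⟩ := master p hp
    exact ⟨a, ⟨ha, haeq⟩, fun y ⟨hy, hyeq⟩ => huniq y hy a ha hyeq haeq⟩
  · intro m hm
    -- lower bound 3/2
    have hlow : ∀ p : ℕ, 4 ≤ p → (3/2 : ℝ) < m p := by
      intro p hp
      obtain ⟨hmem, heq⟩ := hm p hp
      refine (master p hp).2.1 (3/2) (by norm_num) (m p) hmem ?_ heq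
      have h4 : (4 : ℝ) < (3/2 : ℝ) ^ p := by
        calc (4:ℝ) < (3/2:ℝ)^4 := by norm_num
        _ ≤ (3/2:ℝ)^p := pow_le_pow_right₀ (by norm_num) hp
      nlinarith
    have hbounds : ∀ p : ℕ, 4 ≤ p → 2 - 4 * (m p)⁻¹ ^ p < m p ∧ m p < 2 := by
      intro p hp
      obtain ⟨⟨h1, h2⟩, heq⟩ := hm p hp
      refine ⟨?_, h2⟩
      have hpow : 0 < (m p) ^ p := pow_pos (by linarith) p
      rw [inv_pow]
      have hinv : ((m p) ^ p)⁻¹ * (m p) ^ p = 1 := inv_mul_cancel₀ (ne_of_gt hpow)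
      have hinvpos : 0 < ((m p) ^ p)⁻¹ := inv_pos.2 hpow
      nlinarith [heq, hinv, hinvpos, hpow]
    refine ⟨hbounds, ?_, ?_⟩
    · intro p hp
      obtain ⟨⟨h1, h2⟩, heq⟩ := hm p hp
      obtain ⟨hmem', heq'⟩ := hm (p+1) (by omega)
      refine (master (p+1) (by omega)).2.1 (m p) ⟨h1, h2⟩ (m (p+1)) hmem' ?_ heq'
      have hps : (m p) ^ (p+1) = (m p) ^ p * m p := pow_succ (m p) p
      nlinarith [heq, hps, mul_pos (by linarith : (0:ℝ) < 2 * m p - 1) (by linarith : (0:ℝ) < m p - 1)]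
    · -- limit
      have hlo : Filter.Tendsto (fun p : ℕ => 2 - 4 * (2/3 : ℝ) ^ p) Filter.atTop (nhds 2) := by
        have h0 : Filter.Tendsto (fun p : ℕ => (2/3 : ℝ) ^ p) Filter.atTop (nhds 0) :=
          tendsto_pow_atTop_nhds_zero_of_lt_one (by norm_num) (by norm_num)
        have := (h0.const_mul (4:ℝ)).const_sub 2
        simpa using this
      refine tendsto_of_tendsto_of_tendsto_of_le_of_le' hlo tendsto_const_nhds ?_ ?_
      · filter_upwards [Filter.eventually_atTop.2 ⟨4, fun p hp => hp⟩] with p hp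
        have h32 := hlow p hp
        obtain ⟨hb, _⟩ := hbounds p hp
        have hinvle : (m p)⁻¹ ≤ (2/3 : ℝ) := by
          rw [inv_le_comm₀ (by linarith) (by norm_num)]
          linarith [(by norm_num : (2/3:ℝ)⁻¹ = 3/2)]
        have : (m p)⁻¹ ^ p ≤ (2/3 : ℝ) ^ p :=
          pow_le_pow_left₀ (inv_nonneg.2 (by linarith)) hinvle p
        linarith
      · filter_upwards [Filter.eventually_atTop.2 ⟨4, fun p hp => hp⟩] with p hp
        exact (hbounds p hp).2.le
end

section
/- Let ε be a real number with 0 < ε < 1 and let p be an integer with p ≥ 4 and p ≥ log(3/ε)/log(2−ε). Then the unique real number m in (1,2) satisfying m^p (2 − m) = 2m − 1 satisfies log 2 − ε < log m < log 2. -/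
open Real

private lemma phi_deriv (p : ℕ) (x : ℝ) (hx1 : 1 / 2 < x) (hx2 : x < 2) :
    HasDerivAt (fun y => (p : ℝ) * Real.log y - Real.log (2 * y - 1) + Real.log (2 - y))
      ((p : ℝ) * x⁻¹ - (2 * x - 1)⁻¹ * 2 + (2 - x)⁻¹ * (-1)) x := by
  have hx0 : x ≠ 0 := by linarith
  have h1 : 2 * x - 1 ≠ 0 := by linarith
  have h2 : 2 - x ≠ 0 := by linarith
  have d1 := (Real.hasDerivAt_log hx0).const_mul (p : ℝ)
  have d2 : HasDerivAt (fun y : ℝ => 2 * y - 1) 2 x := by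
    simpa using ((hasDerivAt_id x).const_mul (2 : ℝ)).sub_const 1
  have d2' := (Real.hasDerivAt_log h1).comp x d2
  have d3 : HasDerivAt (fun y : ℝ => 2 - y) (-1) x := by
    simpa using (hasDerivAt_id x).const_sub (2 : ℝ)
  have d3' := (Real.hasDerivAt_log h2).comp x d3
  exact (d1.sub d2').add d3'

/-- If `0 < ε < 1` and `p ≥ 4` is an integer with `p ≥ log(3/ε)/log(2-ε)`, then
the unique `m ∈ (1,2)` with `m ^ p * (2 - m) = 2m - 1` satisfies
`log 2 - ε < log m < log 2`. -/
theorem log_mp_close_to_log_two (ε : ℝ) (hε0 : 0 < ε) (hε1 : ε < 1)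
    (p : ℕ) (hp4 : 4 ≤ p) (hp : Real.log (3 / ε) / Real.log (2 - ε) ≤ (p : ℝ))
    (m : ℝ) (hm : m ∈ Set.Ioo (1 : ℝ) 2) (heq : m ^ p * (2 - m) = 2 * m - 1) :
    Real.log 2 - ε < Real.log m ∧ Real.log m < Real.log 2 := by
  obtain ⟨hm1, hm2⟩ := hm
  have hp4' : (4 : ℝ) ≤ (p : ℝ) := by exact_mod_cast hp4
  have h2ε : (1 : ℝ) < 2 - ε := by linarith
  set φ : ℝ → ℝ := fun y => (p : ℝ) * Real.log y - Real.log (2 * y - 1) + Real.log (2 - y)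
    with hφ
  -- the key inequality : 2 - ε < m
  have key : 2 - ε < m := by
    by_contra hcon
    push_neg at hcon
    -- φ 1 = 0
    have hφ1 : φ 1 = 0 := by simp [hφ]
    -- φ (2 - ε) > 0
    have hlogpos : 0 < Real.log (2 - ε) := Real.log_pos h2ε
    have hp' : Real.log (3 / ε) ≤ (p : ℝ) * Real.log (2 - ε) := by
      rw [div_le_iff₀ hlogpos] at hp; linarith [hp]
    have hlogdiv : Real.log (3 / ε) = Real.log 3 - Real.log ε :=
      Real.log_div (by norm_num) hε0.ne'
    have hφ2 : 0 < φ (2 - ε) := by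
      have h1 : Real.log (2 * (2 - ε) - 1) < Real.log 3 :=
        Real.log_lt_log (by linarith) (by linarith)
      have h2 : Real.log (2 - (2 - ε)) = Real.log ε := by ring_nf
      simp only [hφ]
      rw [h2]
      linarith [hp', hlogdiv, h1]
    -- derivative sign control via the quadratic P
    have hderiv : ∀ x ∈ Set.Icc (1 : ℝ) (2 - ε),
        deriv φ x = (p : ℝ) * x⁻¹ - (2 * x - 1)⁻¹ * 2 + (2 - x)⁻¹ * (-1) := by
      intro x hx
      exact (phi_deriv p x (by linarith [hx.1]) (by linarith [hx.2])).deriv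
    have hcont : ContinuousOn φ (Set.Icc (1 : ℝ) (2 - ε)) := by
      intro x hx
      exact (phi_deriv p x (by linarith [hx.1]) (by linarith [hx.2])).continuousAt.continuousWithinAt
    -- express the derivative sign via P x = -2p x² + (5p-3)x - 2p
    have hsign : ∀ x : ℝ, 1 < x → x < 2 →
        (p : ℝ) * x⁻¹ - (2 * x - 1)⁻¹ * 2 + (2 - x)⁻¹ * (-1)
          = (-2 * p * x ^ 2 + (5 * p - 3) * x - 2 * p) / (x * (2 * x - 1) * (2 - x)) := by
      intro x h1 h2
      have hx0 : x ≠ 0 := by linarith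
      have hb : 2 * x - 1 ≠ 0 := by linarith
      have hc : 2 - x ≠ 0 := by linarith
      rw [eq_div_iff (mul_ne_zero (mul_ne_zero hx0 hb) hc)]
      have e1 := inv_mul_cancel₀ hx0
      have e2 := inv_mul_cancel₀ hb
      have e3 := inv_mul_cancel₀ hc
      linear_combination ((p : ℝ) * (2 * x - 1) * (2 - x)) * e1 - (2 * x * (2 - x)) * e2 - (x * (2 * x - 1)) * e3
    have hφm : 0 < φ m := by
      rcases le_or_gt 0 (-2 * (p : ℝ) * m ^ 2 + (5 * p - 3) * m - 2 * p) with hPm | hPm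
      · -- φ strictly increasing on [1, m]
        have hmono : StrictMonoOn φ (Set.Icc (1 : ℝ) m) := by
          apply strictMonoOn_of_deriv_pos (convex_Icc 1 m)
          · exact hcont.mono (Set.Icc_subset_Icc le_rfl hcon)
          · intro x hx
            rw [interior_Icc] at hx
            obtain ⟨hx1, hxm⟩ := hx
            have hx2 : x < 2 := by linarith
            rw [hderiv x ⟨le_of_lt hx1, by linarith⟩, hsign x hx1 hx2]
            apply div_pos
            · nlinarith [mul_pos (mul_pos (show (0:ℝ) < (p:ℝ) by linarith)
                (sub_pos.2 hx1)) (sub_pos.2 hxm), sub_pos.2 hx1, sub_pos.2 hxm]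
            · have : 0 < x := by linarith
              have : 0 < 2 * x - 1 := by linarith
              have : 0 < 2 - x := by linarith
              positivity
        have := hmono (Set.left_mem_Icc.2 hm1.le) (Set.right_mem_Icc.2 hm1.le) hm1
        rwa [hφ1] at this
      · -- φ antitone on [m, 2-ε]
        have hanti : AntitoneOn φ (Set.Icc m (2 - ε)) := by
          apply antitoneOn_of_deriv_nonpos (convex_Icc m (2 - ε))
          · exact hcont.mono (Set.Icc_subset_Icc hm1.le le_rfl)
          · intro x hx
            rw [interior_Icc] at hx
            exact (phi_deriv p x (by linarith [hx.1]) (by linarith [hx.2])).differentiableAt.differentiableWithinAt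
          · intro x hx
            rw [interior_Icc] at hx
            obtain ⟨hxm, hx2ε⟩ := hx
            have hx1 : 1 < x := lt_trans hm1 hxm
            have hx2 : x < 2 := by linarith
            rw [hderiv x ⟨le_of_lt hx1, le_of_lt hx2ε⟩, hsign x hx1 hx2]
            apply div_nonpos_of_nonpos_of_nonneg
            · nlinarith [mul_pos (mul_pos (show (0:ℝ) < (p:ℝ) by linarith)
                (sub_pos.2 (lt_trans hm1 hxm))) (sub_pos.2 hxm), sub_pos.2 hxm,
                sub_pos.2 hm1, hPm]
            · have : 0 < x := by linarith
              have : 0 < 2 * x - 1 := by linarith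
              have : 0 < 2 - x := by linarith
              positivity
        have := hanti (Set.left_mem_Icc.2 hcon) (Set.right_mem_Icc.2 hcon) hcon
        linarith [hφ2]
    -- φ m > 0 contradicts the equation
    have hm0 : (0 : ℝ) < m := by linarith
    have h2m1 : (0 : ℝ) < 2 * m - 1 := by linarith
    have h2m : (0 : ℝ) < 2 - m := by linarith
    have hgt : Real.log (2 * m - 1) < Real.log (m ^ p * (2 - m)) := by
      rw [Real.log_mul (pow_pos hm0 p).ne' h2m.ne', Real.log_pow]
      simp only [hφ] at hφm
      push_cast
      linarith
    have := (Real.log_lt_log_iff h2m1 (by positivity)).mp hgt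
    linarith [this, heq.ge, heq.le]
  -- conclude
  have hlog1 : Real.log (2 - ε) < Real.log m := Real.log_lt_log (by linarith) key
  have hlog2 : Real.log 2 - Real.log (2 - ε) < ε := by
    have h1 : Real.log 2 - Real.log (2 - ε) = Real.log (2 / (2 - ε)) :=
      (Real.log_div (by norm_num) (by linarith)).symm
    rw [h1, Real.log_lt_iff_lt_exp (by positivity)]
    have h2 : 2 / (2 - ε) ≤ 1 + ε := by
      rw [div_le_iff₀ (by linarith)]
      nlinarith
    linarith [Real.add_one_lt_exp hε0.ne', h2]
  exact ⟨by linarith, Real.log_lt_log (by linarith) hm2⟩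
end

section
/- For all integers p, q, r ≥ 2, μ(p,q,r) is strictly increasing in each argument; in particular μ(p,q,r) < μ(p,q,r+1). -/
/-- The vertex set of the tree `T_{p,q,r}`: a central vertex (`none`) together
with three arms of `p-1`, `q-1` and `r-1` vertices. -/
abbrev TVertex (p q r : ℕ) : Type := Option (Fin (p - 1) ⊕ (Fin (q - 1) ⊕ Fin (r - 1)))

/-- Entry recording an edge between positions `i` and `j` of a path. -/
def pathEntry (i j : ℕ) : ℝ := if i + 1 = j ∨ j + 1 = i then 1 else 0

/-- Entry recording the edge from the central vertex to position `i` of an arm. -/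
def tipEntry (i : ℕ) : ℝ := if i = 0 then 1 else 0

/-- The adjacency matrix of the tree `T_{p,q,r}`: a central vertex joined to one
end of each of three paths with `p-1`, `q-1`, and `r-1` vertices respectively. -/
def adjT (p q r : ℕ) : Matrix (TVertex p q r) (TVertex p q r) ℝ :=
  fun v w =>
    match v, w with
    | none, none => 0
    | none, some (Sum.inl i) => tipEntry i
    | none, some (Sum.inr (Sum.inl i)) => tipEntry i
    | none, some (Sum.inr (Sum.inr i)) => tipEntry i
    | some (Sum.inl i), none => tipEntry i
    | some (Sum.inr (Sum.inl i)), none => tipEntry i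
    | some (Sum.inr (Sum.inr i)), none => tipEntry i
    | some (Sum.inl i), some (Sum.inl j) => pathEntry i j
    | some (Sum.inr (Sum.inl i)), some (Sum.inr (Sum.inl j)) => pathEntry i j
    | some (Sum.inr (Sum.inr i)), some (Sum.inr (Sum.inr j)) => pathEntry i j
    | _, _ => 0

/-- `μ(p,q,r)`, the largest eigenvalue of the adjacency matrix of `T_{p,q,r}`. -/
noncomputable def muT (p q r : ℕ) : ℝ :=
  sSup {μ : ℝ | ∃ x : TVertex p q r → ℝ, x ≠ 0 ∧ (adjT p q r).mulVec x = μ • x}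


open Matrix in
theorem exists_top {n : Type} [Fintype n] [DecidableEq n] [Nonempty n]
    (A : Matrix n n ℝ) (hA : A.IsHermitian) :
    ∃ μ : ℝ, (∃ x : n → ℝ, x ≠ 0 ∧ A *ᵥ x = μ • x) ∧
      (∀ z : n → ℝ, z ⬝ᵥ (A *ᵥ z) ≤ μ * (z ⬝ᵥ z)) := by
  set E := EuclideanSpace ℝ n
  set T : E →ₗ[ℝ] E := Matrix.toEuclideanLin A with hT_def
  have hT : T.IsSymmetric := Matrix.isHermitian_iff_isSymmetric.1 hA
  set μ : ℝ := ⨆ x : { x : E // x ≠ 0 }, RCLike.re (inner (𝕜 := ℝ) (T x) x) / ‖(x : E)‖ ^ 2 with hμ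
  have hev : Module.End.HasEigenvalue T μ := hT.hasEigenvalue_iSup_of_finiteDimensional
  -- inner product in coordinates
  have hinner : ∀ u v : E, (inner ℝ u v : ℝ) = (fun i => u i) ⬝ᵥ (fun i => v i) := by
    intro u v
    rw [PiLp.inner_apply]
    simp [dotProduct, mul_comm]
  have hTap : ∀ v : E, ∀ i, (T v) i = (A *ᵥ (fun j => v j)) i := by
    intro v i; rfl
  -- bddAbove
  have hbdd : BddAbove (Set.range fun x : { x : E // x ≠ 0 } =>
      RCLike.re (inner (𝕜 := ℝ) (T x) x) / ‖(x : E)‖ ^ 2) := by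
    refine ⟨‖LinearMap.toContinuousLinearMap T‖, ?_⟩
    rintro y ⟨⟨x, hx⟩, rfl⟩
    have hx' : 0 < ‖x‖ := norm_pos_iff.2 hx
    rw [div_le_iff₀ (by positivity)]
    calc RCLike.re (inner (𝕜 := ℝ) (T x) x) ≤ ‖T x‖ * ‖x‖ := by
          simpa using real_inner_le_norm (T x) x
      _ ≤ ‖LinearMap.toContinuousLinearMap T‖ * ‖x‖ * ‖x‖ := by
          gcongr
          exact (LinearMap.toContinuousLinearMap T).le_opNorm x
      _ = ‖LinearMap.toContinuousLinearMap T‖ * ‖x‖ ^ 2 := by ring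
  have hub : ∀ z : n → ℝ, z ⬝ᵥ (A *ᵥ z) ≤ μ * (z ⬝ᵥ z) := by
    intro z
    rcases eq_or_ne z 0 with rfl | hz
    · simp
    · set zE : E := (WithLp.equiv 2 (n → ℝ)).symm z with hzE
      have hzE0 : zE ≠ 0 := by
        exact fun h => hz (by rw [hzE] at h; simpa using congrArg WithLp.ofLp h)
      have h1 : RCLike.re (inner (𝕜 := ℝ) (T zE) zE) / ‖zE‖ ^ 2 ≤ μ :=
        le_ciSup hbdd ⟨zE, hzE0⟩
      have hnorm : ‖zE‖ ^ 2 = z ⬝ᵥ z := by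
        rw [← real_inner_self_eq_norm_sq]
        rw [hinner]; rfl
      have hpos : (0:ℝ) < ‖zE‖ ^ 2 := pow_pos (norm_pos_iff.2 hzE0) 2
      have h2 : RCLike.re (inner (𝕜 := ℝ) (T zE) zE) = (A *ᵥ z) ⬝ᵥ z := by
        rw [RCLike.re_to_real, hinner]; rfl
      rw [div_le_iff₀ hpos] at h1
      rw [hnorm, h2] at h1
      rw [dotProduct_comm]
      linarith [h1]
  refine ⟨μ, ?_, hub⟩
  obtain ⟨x, hmem, hx⟩ := hev.exists_hasEigenvector
  rw [Module.End.mem_eigenspace_iff] at hmem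
  refine ⟨fun i => x i, fun h => hx (by ext i; exact congrFun h i), ?_⟩
  ext i
  exact congrFun (congrArg (fun v : E => (fun j => v j)) hmem) i


open Matrix in
theorem eig_of_max {n : Type} [Fintype n] [DecidableEq n]
    {A : Matrix n n ℝ} (hA : A.IsHermitian) {μ : ℝ}
    (hub : ∀ z : n → ℝ, z ⬝ᵥ (A *ᵥ z) ≤ μ * (z ⬝ᵥ z))
    {y : n → ℝ} (hy : y ⬝ᵥ (A *ᵥ y) = μ * (y ⬝ᵥ y)) : A *ᵥ y = μ • y := by
  set B : Matrix n n ℝ := μ • (1 : Matrix n n ℝ) - A with hB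
  have hBsd : B.PosSemidef := by
    refine Matrix.posSemidef_iff_dotProduct_mulVec.2 ⟨?_, ?_⟩
    · refine Matrix.IsHermitian.sub ?_ hA
      unfold Matrix.IsHermitian
      ext i j
      simp [Matrix.one_apply, eq_comm]
    · intro x
      have h1 : B *ᵥ x = μ • x - A *ᵥ x := by
        simp [hB, Matrix.sub_mulVec, Matrix.smul_mulVec]
      have h2 : star x = x := by simp
      rw [h2, h1, dotProduct_sub, dotProduct_smul]
      have := hub x
      simp only [smul_eq_mul]
      linarith [this]
  have hq : y ⬝ᵥ (B *ᵥ y) = 0 := by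
    have h1 : B *ᵥ y = μ • y - A *ᵥ y := by
      simp [hB, Matrix.sub_mulVec, Matrix.smul_mulVec]
    rw [h1, dotProduct_sub, dotProduct_smul]
    simp only [smul_eq_mul]
    linarith [hy]
  have hBy : B *ᵥ y = 0 := by
    exact (Matrix.PosSemidef.dotProduct_mulVec_zero_iff hBsd y).1 (by rw [star_trivial]; exact hq)
  have h1 : B *ᵥ y = μ • y - A *ᵥ y := by
    simp [hB, Matrix.sub_mulVec, Matrix.smul_mulVec]
  rw [h1] at hBy
  linear_combination (norm := (ext i; simp)) -hBy


open Matrix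

theorem dp_self_pos {n : Type} [Fintype n] {w : n → ℝ} (hw : w ≠ 0) : 0 < w ⬝ᵥ w := by
  have hnn : 0 ≤ w ⬝ᵥ w := Finset.sum_nonneg fun i _ => mul_self_nonneg (w i)
  rcases hnn.lt_or_eq with h | h
  · exact h
  · exact absurd (dotProduct_self_eq_zero.1 h.symm) hw

theorem dp_expand {n : Type} [Fintype n] (A : Matrix n n ℝ) (z : n → ℝ) :
    z ⬝ᵥ (A *ᵥ z) = ∑ i, ∑ j, z i * (A i j * z j) := by
  simp [dotProduct, Matrix.mulVec, Finset.mul_sum]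

theorem exists_top_nonneg {n : Type} [Fintype n] [DecidableEq n] [Nonempty n]
    (A : Matrix n n ℝ) (hA : A.IsHermitian) (hpos : ∀ i j, 0 ≤ A i j) :
    ∃ μ : ℝ, ∃ y : n → ℝ, (∀ i, 0 ≤ y i) ∧ y ≠ 0 ∧ A *ᵥ y = μ • y ∧
      (∀ z : n → ℝ, z ⬝ᵥ (A *ᵥ z) ≤ μ * (z ⬝ᵥ z)) ∧
      IsGreatest {ν : ℝ | ∃ x : n → ℝ, x ≠ 0 ∧ A *ᵥ x = ν • x} μ := by
  obtain ⟨μ, ⟨x, hx0, hx⟩, hub⟩ := exists_top A hA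
  set y : n → ℝ := fun i => |x i| with hy
  have hyx : y ⬝ᵥ y = x ⬝ᵥ x := by
    simp [dotProduct, hy, abs_mul_abs_self]
  have hy0 : y ≠ 0 := by
    intro h
    apply hx0
    ext i
    have := congrFun h i
    simpa [hy, abs_eq_zero] using this
  have hQx : x ⬝ᵥ (A *ᵥ x) = μ * (x ⬝ᵥ x) := by
    rw [hx]
    simp [dotProduct_smul, dotProduct, Finset.mul_sum, mul_left_comm]
  have hge : x ⬝ᵥ (A *ᵥ x) ≤ y ⬝ᵥ (A *ᵥ y) := by
    rw [dp_expand, dp_expand]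
    refine Finset.sum_le_sum fun i _ => Finset.sum_le_sum fun j _ => ?_
    calc x i * (A i j * x j) ≤ |x i * (A i j * x j)| := le_abs_self _
      _ = y i * (A i j * y j) := by
          rw [abs_mul, abs_mul, abs_of_nonneg (hpos i j)]
  have hQy : y ⬝ᵥ (A *ᵥ y) = μ * (y ⬝ᵥ y) := by
    refine le_antisymm (hub y) ?_
    rw [hyx, ← hQx]
    exact hge
  have hev : A *ᵥ y = μ • y := eig_of_max hA hub hQy
  refine ⟨μ, y, fun i => abs_nonneg _, hy0, hev, hub, ⟨y, hy0, hev⟩, ?_⟩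
  rintro ν ⟨w, hw0, hw⟩
  have h1 : w ⬝ᵥ (A *ᵥ w) = ν * (w ⬝ᵥ w) := by
    rw [hw]
    simp [dotProduct_smul, dotProduct, Finset.mul_sum, mul_left_comm]
  have h2 := hub w
  rw [h1] at h2
  exact le_of_mul_le_mul_right (by rw [mul_comm ν, mul_comm μ] at h2 ⊢; exact h2) (dp_self_pos hw0)


theorem pathEntry_symm (i j : ℕ) : pathEntry i j = pathEntry j i := by
  unfold pathEntry
  congr 1
  exact propext or_comm

theorem pathEntry_nonneg (i j : ℕ) : 0 ≤ pathEntry i j := by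
  unfold pathEntry; split <;> norm_num

theorem tipEntry_nonneg (i : ℕ) : 0 ≤ tipEntry i := by
  unfold tipEntry; split <;> norm_num

theorem adjT_herm (p q r : ℕ) : (adjT p q r).IsHermitian := by
  unfold Matrix.IsHermitian
  ext v w
  rcases v with _ | (i | i | i) <;> rcases w with _ | (j | j | j) <;>
    simp [Matrix.conjTranspose_apply, adjT, pathEntry_symm]

theorem adjT_nonneg (p q r : ℕ) : ∀ v w, 0 ≤ adjT p q r v w := by
  intro v w
  rcases v with _ | (i | i | i) <;> rcases w with _ | (j | j | j) <;>
    simp [adjT, pathEntry_nonneg, tipEntry_nonneg]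

def armSwap13 (α β γ : Type) : Option (α ⊕ (β ⊕ γ)) ≃ Option (γ ⊕ (β ⊕ α)) :=
  Equiv.optionCongr
  { toFun := fun s => match s with
      | .inl a => .inr (.inr a)
      | .inr (.inl b) => .inr (.inl b)
      | .inr (.inr c) => .inl c
    invFun := fun s => match s with
      | .inl c => .inr (.inr c)
      | .inr (.inl b) => .inr (.inl b)
      | .inr (.inr a) => .inl a
    left_inv := by rintro (a | b | c) <;> rfl
    right_inv := by rintro (c | b | a) <;> rfl }

def armSwap23 (α β γ : Type) : Option (α ⊕ (β ⊕ γ)) ≃ Option (α ⊕ (γ ⊕ β)) :=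
  Equiv.optionCongr
  { toFun := fun s => match s with
      | .inl a => .inl a
      | .inr (.inl b) => .inr (.inr b)
      | .inr (.inr c) => .inr (.inl c)
    invFun := fun s => match s with
      | .inl a => .inl a
      | .inr (.inl c) => .inr (.inr c)
      | .inr (.inr b) => .inr (.inl b)
    left_inv := by rintro (a | b | c) <;> rfl
    right_inv := by rintro (a | c | b) <;> rfl }

theorem adjT_swap13 (p q r : ℕ) :
    adjT p q r = (adjT r q p).submatrix (armSwap13 _ _ _) (armSwap13 _ _ _) := by
  ext v w
  rcases v with _ | (i | i | i) <;> rcases w with _ | (j | j | j) <;> rfl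

theorem adjT_swap23 (p q r : ℕ) :
    adjT p q r = (adjT p r q).submatrix (armSwap23 _ _ _) (armSwap23 _ _ _) := by
  ext v w
  rcases v with _ | (i | i | i) <;> rcases w with _ | (j | j | j) <;> rfl

open Matrix in
theorem eigSet_submatrix {m n : Type} [Fintype m] [Fintype n] [DecidableEq m] [DecidableEq n]
    (A : Matrix n n ℝ) (e : m ≃ n) :
    {ν : ℝ | ∃ x : m → ℝ, x ≠ 0 ∧ (A.submatrix e e) *ᵥ x = ν • x} =
      {ν : ℝ | ∃ x : n → ℝ, x ≠ 0 ∧ A *ᵥ x = ν • x} := by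
  ext ν
  constructor
  · rintro ⟨x, hx0, hx⟩
    rw [Matrix.submatrix_mulVec_equiv] at hx
    refine ⟨x ∘ e.symm, ?_, ?_⟩
    · intro h
      apply hx0
      ext i
      simpa using congrFun h (e i)
    · ext i
      have := congrFun hx (e.symm i)
      simpa using this
  · rintro ⟨x, hx0, hx⟩
    refine ⟨x ∘ e, ?_, ?_⟩
    · intro h
      apply hx0
      ext i
      simpa using congrFun h (e.symm i)
    · rw [Matrix.submatrix_mulVec_equiv]
      ext i
      have : (x ∘ e) ∘ e.symm = x := by ext j; simp
      rw [this, hx]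
      rfl

theorem muT_swap13 (p q r : ℕ) : muT p q r = muT r q p := by
  unfold muT
  rw [adjT_swap13 p q r, eigSet_submatrix]

theorem muT_swap23 (p q r : ℕ) : muT p q r = muT p r q := by
  unfold muT
  rw [adjT_swap23 p q r, eigSet_submatrix]

open Matrix

theorem nbr_zero {n : Type} [Fintype n] {A : Matrix n n ℝ} (hpos : ∀ i j, 0 ≤ A i j)
    {μ : ℝ} {y : n → ℝ} (hev : A *ᵥ y = μ • y) (hynn : ∀ i, 0 ≤ y i)
    {v : n} (hv : y v = 0) {w : n} (hw : A v w ≠ 0) : y w = 0 := by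
  have h1 : ∑ j, A v j * y j = 0 := by
    have h := congrFun hev v
    simpa [Matrix.mulVec, dotProduct, hv] using h
  have h2 : ∀ j ∈ Finset.univ, (0:ℝ) ≤ A v j * y j :=
    fun j _ => mul_nonneg (hpos v j) (hynn j)
  have h3 := (Finset.sum_eq_zero_iff_of_nonneg h2).1 h1 w (Finset.mem_univ w)
  rcases mul_eq_zero.1 h3 with h | h
  · exact absurd h hw
  · exact h

theorem pathEntry_succ (k : ℕ) : pathEntry k (k+1) = 1 := by
  unfold pathEntry; rw [if_pos]; left; rfl

theorem pathEntry_succ' (k : ℕ) : pathEntry (k+1) k = 1 := by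
  rw [pathEntry_symm]; exact pathEntry_succ k

theorem tipEntry_zero : tipEntry 0 = 1 := by norm_num [tipEntry]

theorem tip_pos {a b c : ℕ} {μ : ℝ} {y : TVertex (a+2) (b+2) (c+2) → ℝ}
    (hev : (adjT (a+2) (b+2) (c+2)) *ᵥ y = μ • y) (hynn : ∀ v, 0 ≤ y v) (hy0 : y ≠ 0) :
    0 < y (some (Sum.inr (Sum.inr (Fin.last c)))) := by
  rcases (hynn (some (Sum.inr (Sum.inr (Fin.last c))))).lt_or_eq with h | h
  · exact h
  exfalso
  have htip : y (some (Sum.inr (Sum.inr (Fin.last c)))) = 0 := h.symm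
  have hA := adjT_nonneg (a+2) (b+2) (c+2)
  have harm3 : ∀ k : Fin (c+1), y (some (Sum.inr (Sum.inr k))) = 0 := by
    refine fun k => Fin.reverseInduction
      (motive := fun k => y (some (Sum.inr (Sum.inr k))) = 0) htip ?_ k
    intro k ih
    refine nbr_zero hA hev hynn ih ?_
    show pathEntry ((k.succ : Fin (c+1)) : ℕ) ((k.castSucc : Fin (c+1)) : ℕ) ≠ 0
    rw [Fin.val_succ, Fin.coe_castSucc, pathEntry_succ']
    norm_num
  have hcen : y none = 0 := by
    refine nbr_zero hA hev hynn (harm3 0) ?_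
    show tipEntry ((0 : Fin (c+1)) : ℕ) ≠ 0
    rw [show ((0 : Fin (c+1)) : ℕ) = 0 from rfl, tipEntry_zero]
    norm_num
  have harm1 : ∀ i : Fin (a+1), y (some (Sum.inl i)) = 0 := by
    intro i
    induction i using Fin.induction with
    | zero =>
        refine nbr_zero hA hev hynn hcen ?_
        show tipEntry ((0 : Fin (a+1)) : ℕ) ≠ 0
        rw [show ((0 : Fin (a+1)) : ℕ) = 0 from rfl, tipEntry_zero]
        norm_num
    | succ k ih =>
        refine nbr_zero hA hev hynn ih ?_
        show pathEntry ((k.castSucc : Fin (a+1)) : ℕ) ((k.succ : Fin (a+1)) : ℕ) ≠ 0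
        rw [Fin.val_succ, Fin.coe_castSucc, pathEntry_succ]
        norm_num
  have harm2 : ∀ i : Fin (b+1), y (some (Sum.inr (Sum.inl i))) = 0 := by
    intro i
    induction i using Fin.induction with
    | zero =>
        refine nbr_zero hA hev hynn hcen ?_
        show tipEntry ((0 : Fin (b+1)) : ℕ) ≠ 0
        rw [show ((0 : Fin (b+1)) : ℕ) = 0 from rfl, tipEntry_zero]
        norm_num
    | succ k ih =>
        refine nbr_zero hA hev hynn ih ?_
        show pathEntry ((k.castSucc : Fin (b+1)) : ℕ) ((k.succ : Fin (b+1)) : ℕ) ≠ 0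
        rw [Fin.val_succ, Fin.coe_castSucc, pathEntry_succ]
        norm_num
  apply hy0
  ext v
  rcases v with _ | (i | i | i)
  · exact hcen
  · exact harm1 i
  · exact harm2 i
  · exact harm3 i

theorem sum_TV {α β γ : Type} [Fintype α] [Fintype β] [Fintype γ] (f : Option (α ⊕ (β ⊕ γ)) → ℝ) :
    ∑ v, f v = f none + (∑ i, f (some (Sum.inl i))) + (∑ i, f (some (Sum.inr (Sum.inl i)))) +
      ∑ i, f (some (Sum.inr (Sum.inr i))) := by
  simp only [Fintype.sum_option, Fintype.sum_sum_type]
  ring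

theorem mulVec_none (p q r : ℕ) (x : TVertex p q r → ℝ) :
    ((adjT p q r) *ᵥ x) none = (∑ i : Fin (p-1), tipEntry (i:ℕ) * x (some (Sum.inl i))) +
      (∑ i : Fin (q-1), tipEntry (i:ℕ) * x (some (Sum.inr (Sum.inl i)))) +
      ∑ i : Fin (r-1), tipEntry (i:ℕ) * x (some (Sum.inr (Sum.inr i))) := by
  show ∑ w, adjT p q r none w * x w = _
  rw [sum_TV]
  simp [adjT]

theorem mulVec_arm1 (p q r : ℕ) (x : TVertex p q r → ℝ) (i : Fin (p-1)) :
    ((adjT p q r) *ᵥ x) (some (Sum.inl i)) =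
      tipEntry (i:ℕ) * x none + ∑ j : Fin (p-1), pathEntry (i:ℕ) (j:ℕ) * x (some (Sum.inl j)) := by
  show ∑ w, adjT p q r (some (Sum.inl i)) w * x w = _
  rw [sum_TV]
  simp [adjT]

theorem mulVec_arm2 (p q r : ℕ) (x : TVertex p q r → ℝ) (i : Fin (q-1)) :
    ((adjT p q r) *ᵥ x) (some (Sum.inr (Sum.inl i))) =
      tipEntry (i:ℕ) * x none + ∑ j : Fin (q-1), pathEntry (i:ℕ) (j:ℕ) * x (some (Sum.inr (Sum.inl j))) := by
  show ∑ w, adjT p q r (some (Sum.inr (Sum.inl i))) w * x w = _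
  rw [sum_TV]
  simp [adjT]

theorem mulVec_arm3 (p q r : ℕ) (x : TVertex p q r → ℝ) (i : Fin (r-1)) :
    ((adjT p q r) *ᵥ x) (some (Sum.inr (Sum.inr i))) =
      tipEntry (i:ℕ) * x none + ∑ j : Fin (r-1), pathEntry (i:ℕ) (j:ℕ) * x (some (Sum.inr (Sum.inr j))) := by
  show ∑ w, adjT p q r (some (Sum.inr (Sum.inr i))) w * x w = _
  rw [sum_TV]
  simp [adjT]

theorem sum_TV2 (a b c : ℕ) (f : TVertex (a+2) (b+2) (c+2) → ℝ) :
    ∑ v, f v = f none + (∑ i : Fin (a+1), f (some (Sum.inl i))) +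
      (∑ i : Fin (b+1), f (some (Sum.inr (Sum.inl i)))) +
      ∑ i : Fin (c+1), f (some (Sum.inr (Sum.inr i))) := sum_TV f

theorem sum_TV3 (a b c : ℕ) (f : TVertex (a+2) (b+2) (c+3) → ℝ) :
    ∑ v, f v = f none + (∑ i : Fin (a+1), f (some (Sum.inl i))) +
      (∑ i : Fin (b+1), f (some (Sum.inr (Sum.inl i)))) +
      ∑ i : Fin (c+2), f (some (Sum.inr (Sum.inr i))) := sum_TV f

theorem sum_split_c (c : ℕ) (f : Fin (c+2) → ℝ) :
    ∑ i : Fin (c+2), f i = (∑ i : Fin (c+1), f i.castSucc) + f (Fin.last (c+1)) :=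
  Fin.sum_univ_castSucc f

theorem mulVec_none2 (a b c : ℕ) (x : TVertex (a+2) (b+2) (c+2) → ℝ) :
    ((adjT (a+2) (b+2) (c+2)) *ᵥ x) none = (∑ i : Fin (a+1), tipEntry (i:ℕ) * x (some (Sum.inl i))) +
      (∑ i : Fin (b+1), tipEntry (i:ℕ) * x (some (Sum.inr (Sum.inl i)))) +
      ∑ i : Fin (c+1), tipEntry (i:ℕ) * x (some (Sum.inr (Sum.inr i))) := mulVec_none _ _ _ x

theorem mulVec_none3 (a b c : ℕ) (x : TVertex (a+2) (b+2) (c+3) → ℝ) :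
    ((adjT (a+2) (b+2) (c+3)) *ᵥ x) none = (∑ i : Fin (a+1), tipEntry (i:ℕ) * x (some (Sum.inl i))) +
      (∑ i : Fin (b+1), tipEntry (i:ℕ) * x (some (Sum.inr (Sum.inl i)))) +
      ∑ i : Fin (c+2), tipEntry (i:ℕ) * x (some (Sum.inr (Sum.inr i))) := mulVec_none _ _ _ x

theorem mulVec_arm1_2 (a b c : ℕ) (x : TVertex (a+2) (b+2) (c+2) → ℝ) (i : Fin (a+1)) :
    ((adjT (a+2) (b+2) (c+2)) *ᵥ x) (some (Sum.inl i)) =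
      tipEntry (i:ℕ) * x none + ∑ j : Fin (a+1), pathEntry (i:ℕ) (j:ℕ) * x (some (Sum.inl j)) :=
  mulVec_arm1 _ _ _ x i

theorem mulVec_arm1_3 (a b c : ℕ) (x : TVertex (a+2) (b+2) (c+3) → ℝ) (i : Fin (a+1)) :
    ((adjT (a+2) (b+2) (c+3)) *ᵥ x) (some (Sum.inl i)) =
      tipEntry (i:ℕ) * x none + ∑ j : Fin (a+1), pathEntry (i:ℕ) (j:ℕ) * x (some (Sum.inl j)) :=
  mulVec_arm1 _ _ _ x i

theorem mulVec_arm2_2 (a b c : ℕ) (x : TVertex (a+2) (b+2) (c+2) → ℝ) (i : Fin (b+1)) :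
    ((adjT (a+2) (b+2) (c+2)) *ᵥ x) (some (Sum.inr (Sum.inl i))) =
      tipEntry (i:ℕ) * x none +
        ∑ j : Fin (b+1), pathEntry (i:ℕ) (j:ℕ) * x (some (Sum.inr (Sum.inl j))) :=
  mulVec_arm2 _ _ _ x i

theorem mulVec_arm2_3 (a b c : ℕ) (x : TVertex (a+2) (b+2) (c+3) → ℝ) (i : Fin (b+1)) :
    ((adjT (a+2) (b+2) (c+3)) *ᵥ x) (some (Sum.inr (Sum.inl i))) =
      tipEntry (i:ℕ) * x none +
        ∑ j : Fin (b+1), pathEntry (i:ℕ) (j:ℕ) * x (some (Sum.inr (Sum.inl j))) :=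
  mulVec_arm2 _ _ _ x i

theorem mulVec_arm3_2 (a b c : ℕ) (x : TVertex (a+2) (b+2) (c+2) → ℝ) (i : Fin (c+1)) :
    ((adjT (a+2) (b+2) (c+2)) *ᵥ x) (some (Sum.inr (Sum.inr i))) =
      tipEntry (i:ℕ) * x none +
        ∑ j : Fin (c+1), pathEntry (i:ℕ) (j:ℕ) * x (some (Sum.inr (Sum.inr j))) :=
  mulVec_arm3 _ _ _ x i

theorem mulVec_arm3_3 (a b c : ℕ) (x : TVertex (a+2) (b+2) (c+3) → ℝ) (i : Fin (c+2)) :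
    ((adjT (a+2) (b+2) (c+3)) *ᵥ x) (some (Sum.inr (Sum.inr i))) =
      tipEntry (i:ℕ) * x none +
        ∑ j : Fin (c+2), pathEntry (i:ℕ) (j:ℕ) * x (some (Sum.inr (Sum.inr j))) :=
  mulVec_arm3 _ _ _ x i

def extVec (a b c : ℕ) (y : TVertex (a+2) (b+2) (c+2) → ℝ) (ε : ℝ) :
    TVertex (a+2) (b+2) (c+3) → ℝ := fun v =>
  match v with
  | none => y none
  | some (Sum.inl i) => y (some (Sum.inl i))
  | some (Sum.inr (Sum.inl i)) => y (some (Sum.inr (Sum.inl i)))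
  | some (Sum.inr (Sum.inr k)) =>
      (Fin.snoc (fun j : Fin (c+1) => y (some (Sum.inr (Sum.inr j)))) ε : Fin (c+2) → ℝ) k

theorem mono3 (a b c : ℕ) : muT (a+2) (b+2) (c+2) < muT (a+2) (b+2) (c+3) := by
  obtain ⟨μ, y, hynn, hy0, hev, hub, hG⟩ :=
    exists_top_nonneg (adjT (a+2) (b+2) (c+2)) (adjT_herm _ _ _) (adjT_nonneg _ _ _)
  obtain ⟨μ', y', hynn', hy0', hev', hub', hG'⟩ :=
    exists_top_nonneg (adjT (a+2) (b+2) (c+3)) (adjT_herm _ _ _) (adjT_nonneg _ _ _)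
  rw [show muT (a+2) (b+2) (c+2) = μ from hG.csSup_eq,
    show muT (a+2) (b+2) (c+3) = μ' from hG'.csSup_eq]
  have htpos : 0 < y (some (Sum.inr (Sum.inr (Fin.last c)))) := tip_pos hev hynn hy0
  set t := y (some (Sum.inr (Sum.inr (Fin.last c)))) with ht_def
  have hey : ∀ v, ((adjT (a+2) (b+2) (c+2)) *ᵥ y) v = μ * y v := by
    intro v; rw [hev]; rfl
  have hNpos : 0 < y ⬝ᵥ y := dp_self_pos hy0
  set N := y ⬝ᵥ y with hN_def
  have hm : (0:ℝ) < max μ 1 := lt_of_lt_of_le one_pos (le_max_right _ _)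
  set ε := t / max μ 1 with hε_def
  have hε : 0 < ε := div_pos htpos hm
  set x := extVec a b c y ε with hx_def
  set Y3 : Fin (c+1) → ℝ := fun j => y (some (Sum.inr (Sum.inr j))) with hY3_def
  have hY3 : ∀ j : Fin (c+1), y (some (Sum.inr (Sum.inr j))) = Y3 j := fun _ => by rw [hY3_def]
  have hx0 : x none = y none := by rw [hx_def]; rfl
  have hx1 : ∀ i : Fin (a+1), x (some (Sum.inl i)) = y (some (Sum.inl i)) := fun _ => by
    rw [hx_def]; rfl
  have hx2 : ∀ i : Fin (b+1), x (some (Sum.inr (Sum.inl i))) = y (some (Sum.inr (Sum.inl i))) :=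
    fun _ => by rw [hx_def]; rfl
  have hx3 : ∀ k : Fin (c+2), x (some (Sum.inr (Sum.inr k))) = (Fin.snoc Y3 ε : Fin (c+2) → ℝ) k := fun _ => by
    rw [hx_def, hY3_def]; rfl
  have htY : Y3 (Fin.last c) = t := by rw [hY3_def, ht_def]
  have htipc : tipEntry (c+1) = 0 := by norm_num [tipEntry]
  -- rows of the bigger matrix applied to x
  have H0 : ((adjT (a+2) (b+2) (c+3)) *ᵥ x) none = μ * y none := by
    rw [mulVec_none3, sum_split_c]
    have h := hey none
    rw [mulVec_none2] at h
    simp only [hx0, hx1, hx2, hx3, Fin.snoc_castSucc, Fin.snoc_last, Fin.coe_castSucc,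
      Fin.val_last, htipc, hY3, zero_mul, add_zero] at h ⊢
    linarith [h]
  have H1 : ∀ i : Fin (a+1), ((adjT (a+2) (b+2) (c+3)) *ᵥ x) (some (Sum.inl i)) =
      μ * y (some (Sum.inl i)) := by
    intro i
    rw [mulVec_arm1_3]
    have h := hey (some (Sum.inl i))
    rw [mulVec_arm1_2] at h
    simp only [hx0, hx1] at *
    exact h
  have H2 : ∀ i : Fin (b+1), ((adjT (a+2) (b+2) (c+3)) *ᵥ x) (some (Sum.inr (Sum.inl i))) =
      μ * y (some (Sum.inr (Sum.inl i))) := by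
    intro i
    rw [mulVec_arm2_3]
    have h := hey (some (Sum.inr (Sum.inl i)))
    rw [mulVec_arm2_2] at h
    simp only [hx0, hx2] at *
    exact h
  have H3a : ∀ k : Fin (c+1), ((adjT (a+2) (b+2) (c+3)) *ᵥ x) (some (Sum.inr (Sum.inr k.castSucc)))
      = μ * Y3 k + (if k = Fin.last c then ε else 0) := by
    intro k
    rw [mulVec_arm3_3, sum_split_c]
    have h := hey (some (Sum.inr (Sum.inr k)))
    rw [mulVec_arm3_2] at h
    have hpe : pathEntry (k : ℕ) (c+1) =
        if k = Fin.last c then 1 else 0 := by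
      unfold pathEntry
      rcases eq_or_ne k (Fin.last c) with rfl | hk
      · rw [if_pos, if_pos rfl]
        left; rw [Fin.val_last]
      · rw [if_neg, if_neg hk]
        have hlt := k.isLt
        have hne : (k : ℕ) ≠ c := fun hc => hk (Fin.ext (by rw [hc, Fin.val_last]))
        push_neg
        omega
    simp only [hx0, hx1, hx2, hx3, Fin.snoc_castSucc, Fin.snoc_last, Fin.coe_castSucc,
      Fin.val_last, hY3, hpe] at h ⊢
    split_ifs <;> simp only [one_mul, zero_mul, add_zero] <;> linarith [h]
  have H3b : ((adjT (a+2) (b+2) (c+3)) *ᵥ x) (some (Sum.inr (Sum.inr (Fin.last (c+1))))) = t := by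
    rw [mulVec_arm3_3, sum_split_c]
    have hpe : ∀ j : Fin (c+1), pathEntry (c+1) (j : ℕ) = if j = Fin.last c then 1 else 0 := by
      intro j
      unfold pathEntry
      rcases eq_or_ne j (Fin.last c) with rfl | hj
      · rw [if_pos, if_pos rfl]
        right; rw [Fin.val_last]
      · rw [if_neg, if_neg hj]
        have hlt := j.isLt
        have hne : (j : ℕ) ≠ c := fun hc => hj (Fin.ext (by rw [hc, Fin.val_last]))
        push_neg
        omega
    have hdiag : pathEntry (c+1) (c+1) = 0 := by
      unfold pathEntry
      rw [if_neg]
      push_neg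
      omega
    simp only [hx0, hx3, Fin.snoc_castSucc, Fin.snoc_last, Fin.coe_castSucc, Fin.val_last,
      hpe, hdiag, htipc, ite_mul, one_mul,
      zero_mul, mul_zero, zero_add, add_zero, Finset.sum_ite_eq', Finset.mem_univ, if_pos, if_true]
    try exact htY
  -- quadratic form expansion helper
  have pull : ∀ {ι : Type} (s : Finset ι) (g : ι → ℝ), (∑ i ∈ s, g i * (μ * g i)) =
      μ * ∑ i ∈ s, g i * g i := by
    intro ι s g
    rw [Finset.mul_sum]
    exact Finset.sum_congr rfl (fun i _ => by ring)
  have hNe : N = y none * y none + (∑ i : Fin (a+1), y (some (Sum.inl i)) * y (some (Sum.inl i)))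
      + (∑ i : Fin (b+1), y (some (Sum.inr (Sum.inl i))) * y (some (Sum.inr (Sum.inl i))))
      + ∑ j : Fin (c+1), Y3 j * Y3 j := by
    rw [hN_def]
    show ∑ v, y v * y v = _
    rw [sum_TV2]
    try simp only [hY3]
  have hQ : x ⬝ᵥ ((adjT (a+2) (b+2) (c+3)) *ᵥ x) = μ * N + 2*ε*t := by
    show ∑ v, x v * ((adjT (a+2) (b+2) (c+3)) *ᵥ x) v = _
    rw [sum_TV3, sum_split_c]
    simp only [hx0, hx1, hx2, hx3, Fin.snoc_castSucc, Fin.snoc_last, H0, H1, H2, H3a, H3b]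
    simp only [mul_add, Finset.sum_add_distrib, mul_ite, mul_zero, Finset.sum_ite_eq',
      Finset.mem_univ, if_true]
    rw [pull, pull, pull, hNe, htY]
    ring
  have hxx : x ⬝ᵥ x = N + ε^2 := by
    show ∑ v, x v * x v = _
    rw [sum_TV3, sum_split_c]
    simp only [hx0, hx1, hx2, hx3, Fin.snoc_castSucc, Fin.snoc_last]
    rw [hNe]
    ring
  have hkey : μ * N + 2*ε*t ≤ μ' * (N + ε^2) := by
    rw [← hQ, ← hxx]
    exact hub' x
  have hmε : μ * ε ≤ t := by
    have h1 : μ * ε ≤ (max μ 1) * ε := mul_le_mul_of_nonneg_right (le_max_left _ _) hε.le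
    have h2 : (max μ 1) * ε = t := by
      rw [hε_def]
      field_simp
    linarith
  by_contra hcon
  push_neg at hcon
  have h3 : μ' * (N + ε^2) ≤ μ * (N + ε^2) :=
    mul_le_mul_of_nonneg_right hcon (by positivity)
  nlinarith [mul_le_mul_of_nonneg_right hmε hε.le, mul_pos hε htpos]

/-- `μ(p,q,r)` is strictly increasing in each argument; in particular
`μ(p,q,r) < μ(p,q,r+1)`. -/
theorem muT_strictMono_in_each_argument (p q r : ℕ) (hp : 2 ≤ p) (hq : 2 ≤ q) (hr : 2 ≤ r) :
    muT p q r < muT (p + 1) q r ∧ muT p q r < muT p (q + 1) r ∧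
      muT p q r < muT p q (r + 1) := by
  obtain ⟨a, rfl⟩ : ∃ a, p = a + 2 := ⟨p - 2, by omega⟩
  obtain ⟨b, rfl⟩ : ∃ b, q = b + 2 := ⟨q - 2, by omega⟩
  obtain ⟨c, rfl⟩ : ∃ c, r = c + 2 := ⟨r - 2, by omega⟩
  refine ⟨?_, ?_, mono3 a b c⟩
  · have h := calc muT (a+2) (b+2) (c+2) = muT (c+2) (b+2) (a+2) := muT_swap13 _ _ _
      _ < muT (c+2) (b+2) (a+3) := mono3 c b a
      _ = muT (a+3) (b+2) (c+2) := muT_swap13 _ _ _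
    exact h
  · have h := calc muT (a+2) (b+2) (c+2) = muT (a+2) (c+2) (b+2) := muT_swap23 _ _ _
      _ < muT (a+2) (c+2) (b+3) := mono3 a c b
      _ = muT (a+2) (b+3) (c+2) := muT_swap23 _ _ _
    exact h
end

section
/- For every integer p ≥ 3, write μ_p = μ(p,p,p) and let m_p ≥ 1 be the unique real number with m_p + m_p^{−1} + 2 = μ_p². Then m_p^p (2 − m_p) = 2 m_p − 1. -/
/-! ### Auxiliary lemmas -/

/-- Extension of a function on `Fin n` to `ℕ` by zero. -/
def extFn {n : ℕ} (u : Fin n → ℝ) (k : ℕ) : ℝ := if h : k < n then u ⟨k, h⟩ else 0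

lemma extFn_lt {n : ℕ} (u : Fin n → ℝ) {k : ℕ} (h : k < n) : extFn u k = u ⟨k, h⟩ := dif_pos h
lemma extFn_ge {n : ℕ} (u : Fin n → ℝ) {k : ℕ} (h : ¬ k < n) : extFn u k = 0 := dif_neg h

lemma sum_ite_coord {n : ℕ} (u : Fin n → ℝ) (k : ℕ) :
    (∑ j : Fin n, (if (j : ℕ) = k then (1:ℝ) else 0) * u j) = extFn u k := by
  unfold extFn
  split_ifs with h
  · rw [Finset.sum_eq_single (⟨k, h⟩ : Fin n)]
    · simp
    · intro j _ hj
      have : (j : ℕ) ≠ k := fun hc => hj (Fin.ext hc)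
      simp [this]
    · simp
  · apply Finset.sum_eq_zero
    intro j _
    have : (j : ℕ) ≠ k := by have := j.isLt; omega
    simp [this]

lemma sum_tip {n : ℕ} (u : Fin n → ℝ) :
    (∑ j : Fin n, tipEntry (j : ℕ) * u j) = extFn u 0 := by
  rw [← sum_ite_coord u 0]
  exact Finset.sum_congr rfl fun j _ => by unfold tipEntry; rfl

lemma sum_path {n : ℕ} (u : Fin n → ℝ) (i : Fin n) :
    (∑ j : Fin n, pathEntry (i : ℕ) (j : ℕ) * u j) =
      extFn u ((i : ℕ) + 1) + (if 1 ≤ (i : ℕ) then extFn u ((i : ℕ) - 1) else 0) := by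
  have hsplit : ∀ j : Fin n, pathEntry (i : ℕ) (j : ℕ) * u j =
      (if (j : ℕ) = (i : ℕ) + 1 then (1:ℝ) else 0) * u j +
      (if 1 ≤ (i : ℕ) then (if (j : ℕ) = (i : ℕ) - 1 then (1:ℝ) else 0) * u j else 0) := by
    intro j
    unfold pathEntry
    split_ifs <;> first | ring1 | omega
  rw [Finset.sum_congr rfl fun j _ => hsplit j, Finset.sum_add_distrib, sum_ite_coord]
  by_cases h1 : 1 ≤ (i : ℕ)
  · simp only [if_pos h1, sum_ite_coord]
  · simp [h1]

/-- Solving the eigenvalue recurrence along one arm of the tree. -/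
lemma armSolve (μ t : ℝ) (ht0 : t ≠ 0) (ht1 : t - t⁻¹ ≠ 0) (hμ : μ = t + t⁻¹)
    (n : ℕ) (hn : 2 ≤ n) (U : ℕ → ℝ) (c : ℝ)
    (hlast : U (n-2) = μ * U (n-1))
    (hint : ∀ j, 1 ≤ j → j ≤ n-2 → U (j-1) + U (j+1) = μ * U j)
    (h0 : c + U 1 = μ * U 0) :
    ∃ α : ℝ, (∀ j, j < n → U j = α * (t^(n-j) - (t^(n-j))⁻¹)) ∧
      c = α * (t^n * t - (t^n * t)⁻¹) := by
  have ht1' : t * t - 1 ≠ 0 := by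
    intro h
    apply ht1
    have : t - t⁻¹ = (t*t-1)/t := by field_simp
    rw [this, h, zero_div]
  set α := U (n-1) / (t - t⁻¹) with hα
  have key : ∀ j, j ≤ n - 1 → U (n-1-j) = α * (t^(j+1) - (t^(j+1))⁻¹) := by
    intro j
    induction j using Nat.strong_induction_on with
    | _ j ih =>
      intro hj
      rcases j with _ | _ | k
      · simp only [Nat.sub_zero, zero_add, pow_one]
        rw [hα]
        exact (div_mul_cancel₀ _ ht1).symm
      · have h0' := ih 0 (by omega) (by omega)
        simp only [Nat.sub_zero, pow_one] at h0'
        have hsub : n - 1 - 1 = n - 2 := by omega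
        rw [hsub, hlast, h0', hμ]
        field_simp
        ring
      · have e1 := ih (k+1) (by omega) (by omega)
        have e0 := ih k (by omega) (by omega)
        have hi := hint (n-2-k) (by omega) (by omega)
        have ha : n-2-k-1 = n-1-(k+2) := by omega
        have hb : n-2-k+1 = n-1-k := by omega
        have hcq : n-2-k = n-1-(k+1) := by omega
        rw [ha, hb, hcq, e1, e0] at hi
        have hx : U (n-1-(k+2)) =
            μ * (α * (t^(k+1+1) - (t^(k+1+1))⁻¹)) - α * (t^(k+1) - (t^(k+1))⁻¹) := by
          linarith
        rw [hx, hμ]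
        have hp1 : t^(k+1) ≠ 0 := pow_ne_zero _ ht0
        have hp2 : t^(k+1+1) ≠ 0 := pow_ne_zero _ ht0
        have hp3 : t^(k+2+1) ≠ 0 := pow_ne_zero _ ht0
        field_simp
        ring
  have hall : ∀ j, j < n → U j = α * (t^(n-j) - (t^(n-j))⁻¹) := by
    intro j hj
    have h := key (n-1-j) (by omega)
    have h1 : n-1-(n-1-j) = j := by omega
    have h2 : n-1-j+1 = n-j := by omega
    rw [h1, h2] at h
    exact h
  refine ⟨α, hall, ?_⟩
  have hu0 := hall 0 (by omega)
  have hu1 := hall 1 (by omega)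
  simp only [Nat.sub_zero] at hu0
  have hc : c = μ * U 0 - U 1 := by linarith
  rw [hc, hu0, hu1, hμ]
  have hb : t^n = t^(n-1) * t := by
    rw [← pow_succ]
    congr 1
    omega
  rw [hb]
  have hbne : t^(n-1) ≠ 0 := pow_ne_zero _ ht0
  field_simp
  ring

/-- Extracting the scalar recurrences from the row equations along an arm. -/
lemma arm_eqs {n : ℕ} (hn : 2 ≤ n) (μ c : ℝ) (u : Fin n → ℝ)
    (h : ∀ i : Fin n, tipEntry (i:ℕ) * c +
      (extFn u ((i : ℕ) + 1) + (if 1 ≤ (i : ℕ) then extFn u ((i : ℕ) - 1) else 0)) = μ * u i) :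
    extFn u (n-2) = μ * extFn u (n-1) ∧
    (∀ j, 1 ≤ j → j ≤ n-2 → extFn u (j-1) + extFn u (j+1) = μ * extFn u j) ∧
    c + extFn u 1 = μ * extFn u 0 := by
  have key : ∀ (k : ℕ) (hk : k < n), tipEntry k * c +
      (extFn u (k + 1) + (if 1 ≤ k then extFn u (k - 1) else 0)) = μ * extFn u k := by
    intro k hk
    rw [extFn_lt u hk]
    exact h ⟨k, hk⟩
  refine ⟨?_, ?_, ?_⟩
  · have hi := key (n-1) (by omega)
    rw [if_pos (by omega : 1 ≤ n-1), extFn_ge u (by omega : ¬ n-1+1 < n)] at hi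
    have e2 : n-1-1 = n-2 := by omega
    have e3 : tipEntry (n-1) = 0 := by unfold tipEntry; rw [if_neg (by omega)]
    rw [e2, e3] at hi
    linarith
  · intro j hj1 hj2
    have hi := key j (by omega)
    rw [if_pos hj1] at hi
    have e3 : tipEntry j = 0 := by unfold tipEntry; rw [if_neg (by omega)]
    rw [e3] at hi
    linarith
  · have hi := key 0 (by omega)
    rw [if_neg (by omega : ¬ (1:ℕ) ≤ 0)] at hi
    have e3 : tipEntry 0 = 1 := by unfold tipEntry; rw [if_pos rfl]
    rw [e3] at hi
    norm_num at hi
    linarith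

set_option maxHeartbeats 1000000 in
/-- For `p ≥ 3`, if `μ_p = μ(p,p,p)` and `m_p ≥ 1` satisfies
`m_p + m_p⁻¹ + 2 = μ_p²`, then `m_p ^ p * (2 - m_p) = 2 * m_p - 1`. -/
theorem mp_equation_of_muT (p : ℕ) (hp : 3 ≤ p) (m : ℝ) (hm : 1 ≤ m)
    (heq : m + m⁻¹ + 2 = (muT p p p) ^ 2) :
    m ^ p * (2 - m) = 2 * m - 1 := by
  rcases eq_or_lt_of_le hm with hm1 | hm1
  · rw [← hm1]; norm_num
  have hm0 : (0:ℝ) < m := by linarith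
  set μ := muT p p p with hμdef
  have hμ2 : μ ^ 2 = m + m⁻¹ + 2 := heq.symm
  have hminv : 0 < m⁻¹ := inv_pos.mpr hm0
  have hmm : m⁻¹ * m = 1 := inv_mul_cancel₀ (ne_of_gt hm0)
  have hμ4 : 4 ≤ μ ^ 2 := by
    rw [hμ2]
    nlinarith [sq_nonneg (m - 1)]
  -- the set of eigenvalues is finite and nonempty; `μ` is one of them
  set S := {μ' : ℝ | ∃ x : TVertex p p p → ℝ, x ≠ 0 ∧ (adjT p p p).mulVec x = μ' • x} with hS
  have hfin : S.Finite := by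
    apply Set.Finite.subset (Module.End.finite_hasEigenvalue (R := ℝ)
      (Matrix.mulVecLin (adjT p p p) : Module.End ℝ (TVertex p p p → ℝ)))
    rintro μ' ⟨x, hx, hxe⟩
    exact Module.End.hasEigenvalue_of_hasEigenvector
      ⟨Module.End.mem_eigenspace_iff.mpr (by simpa using hxe : (Matrix.mulVecLin (adjT p p p)) x = μ' • x), hx⟩
  have hμS : μ = sSup S := rfl
  have hne : S.Nonempty := by
    by_contra h
    rw [Set.not_nonempty_iff_eq_empty] at h
    rw [hμS, h, Real.sSup_empty] at hμ4
    · norm_num at hμ4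
  have hmem : μ ∈ S := hμS ▸ hne.csSup_mem hfin
  obtain ⟨x, hx0, hxe⟩ := hmem
  -- produce `t` with `t² = m` and `μ = t + t⁻¹`
  obtain ⟨t, ht2, htμ⟩ : ∃ t : ℝ, t ^ 2 = m ∧ μ = t + t⁻¹ := by
    set s := Real.sqrt m with hsdef
    have hs0 : 0 < s := Real.sqrt_pos.mpr hm0
    have hs2 : s ^ 2 = m := Real.sq_sqrt hm0.le
    have hsum : (s + s⁻¹) ^ 2 = m + m⁻¹ + 2 := by
      rw [← hs2]
      field_simp
      ring
    have hfactor : (μ - (s + s⁻¹)) * (μ + (s + s⁻¹)) = 0 := by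
      linear_combination hμ2 - hsum
    rcases mul_eq_zero.mp hfactor with h | h
    · exact ⟨s, hs2, by linarith⟩
    · refine ⟨-s, by rw [neg_pow]; simpa using hs2, ?_⟩
      rw [inv_neg]
      linarith
  have htne : t ≠ 0 := by
    intro h
    rw [h] at ht2
    simp at ht2
    linarith
  have ht1 : t - t⁻¹ ≠ 0 := by
    intro h
    have he : t = t⁻¹ := by linarith
    have h2 : t * t = 1 := by nth_rewrite 2 [he]; exact mul_inv_cancel₀ htne
    have : m = 1 := by rw [← ht2, pow_two]; exact h2
    linarith
  -- extract the row equations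
  have hrow1 : ∀ i : Fin (p-1), tipEntry (i:ℕ) * x none +
      (extFn (fun j : Fin (p-1) => x (some (Sum.inl j))) ((i : ℕ) + 1) +
        (if 1 ≤ (i : ℕ) then extFn (fun j : Fin (p-1) => x (some (Sum.inl j))) ((i : ℕ) - 1) else 0))
      = μ * x (some (Sum.inl i)) := by
    intro i
    have h := congrFun hxe (some (Sum.inl i))
    simp only [Matrix.mulVec, dotProduct, Pi.smul_apply, smul_eq_mul,
      Fintype.sum_option, Fintype.sum_sum_type] at h
    simp only [show ∀ i, adjT p p p (some (Sum.inl i)) none = tipEntry i from fun _ => rfl,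
      show ∀ i j, adjT p p p (some (Sum.inl i)) (some (Sum.inl j)) = pathEntry i j from fun _ _ => rfl,
      show ∀ i j, adjT p p p (some (Sum.inl i)) (some (Sum.inr (Sum.inl j))) = 0 from fun _ _ => rfl,
      show ∀ i j, adjT p p p (some (Sum.inl i)) (some (Sum.inr (Sum.inr j))) = 0 from fun _ _ => rfl,
      zero_mul, Finset.sum_const_zero, add_zero] at h
    rw [sum_path] at h
    exact h
  have hrow2 : ∀ i : Fin (p-1), tipEntry (i:ℕ) * x none +
      (extFn (fun j : Fin (p-1) => x (some (Sum.inr (Sum.inl j)))) ((i : ℕ) + 1) +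
        (if 1 ≤ (i : ℕ) then extFn (fun j : Fin (p-1) => x (some (Sum.inr (Sum.inl j)))) ((i : ℕ) - 1) else 0))
      = μ * x (some (Sum.inr (Sum.inl i))) := by
    intro i
    have h := congrFun hxe (some (Sum.inr (Sum.inl i)))
    simp only [Matrix.mulVec, dotProduct, Pi.smul_apply, smul_eq_mul,
      Fintype.sum_option, Fintype.sum_sum_type] at h
    simp only [show ∀ i, adjT p p p (some (Sum.inr (Sum.inl i))) none = tipEntry i from fun _ => rfl,
      show ∀ i j, adjT p p p (some (Sum.inr (Sum.inl i))) (some (Sum.inl j)) = 0 from fun _ _ => rfl,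
      show ∀ i j, adjT p p p (some (Sum.inr (Sum.inl i))) (some (Sum.inr (Sum.inl j))) = pathEntry i j from fun _ _ => rfl,
      show ∀ i j, adjT p p p (some (Sum.inr (Sum.inl i))) (some (Sum.inr (Sum.inr j))) = 0 from fun _ _ => rfl,
      zero_mul, Finset.sum_const_zero, add_zero, zero_add] at h
    rw [sum_path] at h
    exact h
  have hrow3 : ∀ i : Fin (p-1), tipEntry (i:ℕ) * x none +
      (extFn (fun j : Fin (p-1) => x (some (Sum.inr (Sum.inr j)))) ((i : ℕ) + 1) +
        (if 1 ≤ (i : ℕ) then extFn (fun j : Fin (p-1) => x (some (Sum.inr (Sum.inr j)))) ((i : ℕ) - 1) else 0))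
      = μ * x (some (Sum.inr (Sum.inr i))) := by
    intro i
    have h := congrFun hxe (some (Sum.inr (Sum.inr i)))
    simp only [Matrix.mulVec, dotProduct, Pi.smul_apply, smul_eq_mul,
      Fintype.sum_option, Fintype.sum_sum_type] at h
    simp only [show ∀ i, adjT p p p (some (Sum.inr (Sum.inr i))) none = tipEntry i from fun _ => rfl,
      show ∀ i j, adjT p p p (some (Sum.inr (Sum.inr i))) (some (Sum.inl j)) = 0 from fun _ _ => rfl,
      show ∀ i j, adjT p p p (some (Sum.inr (Sum.inr i))) (some (Sum.inr (Sum.inl j))) = 0 from fun _ _ => rfl,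
      show ∀ i j, adjT p p p (some (Sum.inr (Sum.inr i))) (some (Sum.inr (Sum.inr j))) = pathEntry i j from fun _ _ => rfl,
      zero_mul, Finset.sum_const_zero, add_zero, zero_add] at h
    rw [sum_path] at h
    exact h
  have hcent : extFn (fun j : Fin (p-1) => x (some (Sum.inl j))) 0 +
      (extFn (fun j : Fin (p-1) => x (some (Sum.inr (Sum.inl j)))) 0 +
        extFn (fun j : Fin (p-1) => x (some (Sum.inr (Sum.inr j)))) 0) = μ * x none := by
    have h := congrFun hxe none
    simp only [Matrix.mulVec, dotProduct, Pi.smul_apply, smul_eq_mul,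
      Fintype.sum_option, Fintype.sum_sum_type] at h
    simp only [show adjT p p p none none = 0 from rfl,
      show ∀ j, adjT p p p none (some (Sum.inl j)) = tipEntry j from fun _ => rfl,
      show ∀ j, adjT p p p none (some (Sum.inr (Sum.inl j))) = tipEntry j from fun _ => rfl,
      show ∀ j, adjT p p p none (some (Sum.inr (Sum.inr j))) = tipEntry j from fun _ => rfl,
      zero_mul, zero_add] at h
    rw [sum_tip, sum_tip, sum_tip] at h
    exact h
  have hn2 : 2 ≤ p - 1 := by omega
  obtain ⟨e1last, e1int, e10⟩ := arm_eqs hn2 μ (x none) _ hrow1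
  obtain ⟨e2last, e2int, e20⟩ := arm_eqs hn2 μ (x none) _ hrow2
  obtain ⟨e3last, e3int, e30⟩ := arm_eqs hn2 μ (x none) _ hrow3
  obtain ⟨α₁, hall1, hc1⟩ := armSolve μ t htne ht1 htμ (p-1) hn2 _ (x none) e1last e1int e10
  obtain ⟨α₂, hall2, hc2⟩ := armSolve μ t htne ht1 htμ (p-1) hn2 _ (x none) e2last e2int e20
  obtain ⟨α₃, hall3, hc3⟩ := armSolve μ t htne ht1 htμ (p-1) hn2 _ (x none) e3last e3int e30
  -- the leading coefficient is nonzero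
  set g := t^(p-1) with hgdef
  have hgne : g ≠ 0 := pow_ne_zero _ htne
  have hgt : g * t = t ^ p := by
    rw [hgdef, ← pow_succ]
    congr 1
    omega
  have hmp : m ^ p = (g * t) ^ 2 := by
    rw [← ht2, hgt, ← pow_mul, mul_comm 2 p, pow_mul]
  have hmp1 : 1 < m ^ p := one_lt_pow₀ hm1 (by omega)
  have hEne : g * t - (g * t)⁻¹ ≠ 0 := by
    intro h
    have hpne : g * t ≠ 0 := mul_ne_zero hgne htne
    have he : g * t = (g * t)⁻¹ := by linarith
    have h2 : (g * t) * (g * t) = 1 := by nth_rewrite 2 [he]; exact mul_inv_cancel₀ hpne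
    have : m ^ p = 1 := by rw [hmp, pow_two]; exact h2
    linarith
  have hD : t^(p-1) * t = g * t := rfl
  rw [hD] at hc1 hc2 hc3
  have hα21 : α₂ = α₁ := mul_right_cancel₀ hEne (hc2.symm.trans hc1)
  have hα31 : α₃ = α₁ := mul_right_cancel₀ hEne (hc3.symm.trans hc1)
  have hα1ne : α₁ ≠ 0 := by
    intro h0α
    have hc0 : x none = 0 := by rw [hc1, h0α, zero_mul]
    apply hx0
    funext v
    have hz : ∀ (j : Fin (p-1)) (α : ℝ) (u : Fin (p-1) → ℝ), α = 0 →
        (∀ k, k < p-1 → extFn u k = α * (t^(p-1-k) - (t^(p-1-k))⁻¹)) → u j = 0 := by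
      intro j α u hα0 hall
      have := hall (j : ℕ) j.isLt
      rw [extFn_lt u j.isLt, Fin.eta, hα0, zero_mul] at this
      exact this
    match v with
    | none => exact hc0
    | some (Sum.inl j) => exact hz j α₁ _ h0α hall1
    | some (Sum.inr (Sum.inl j)) => exact hz j α₂ _ (hα21.trans h0α) hall2
    | some (Sum.inr (Sum.inr j)) => exact hz j α₃ _ (hα31.trans h0α) hall3
  -- the central equation gives the key identity
  have h10 := hall1 0 (by omega)
  have h20 := hall2 0 (by omega)
  have h30 := hall3 0 (by omega)
  simp only [Nat.sub_zero] at h10 h20 h30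
  rw [h10, h20, h30, hc1, htμ, hα21, hα31, ← hgdef] at hcent
  have key : 3 * (g - g⁻¹) = (t + t⁻¹) * (g * t - (g * t)⁻¹) :=
    mul_left_cancel₀ hα1ne (by linear_combination hcent)
  -- conclude the algebra
  rw [hmp, ← ht2]
  have hgtne : g * t ≠ 0 := mul_ne_zero hgne htne
  field_simp at key
  have hfin2 : g * ((g*t)^2 * (2 - t^2) - (2*t^2 - 1)) = 0 := by linear_combination g * key
  rcases mul_eq_zero.mp hfin2 with h | h
  · exact absurd h hgne
  · linarith
end
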